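/- arXiv:2302.03886 — 5 statements merged into one kernel-verified Lean document; each statement's English description precedes it below -/
import Mathlib

section
/- Let X ≠ 0 be an order-N real tensor of shape (I_1,…,I_N), let c ≥ 1 + Σ_{n=1}^N I_n, let F = {r ∈ [I_1]×⋯×[I_N] : ∏_{n=1}^N R_n + Σ_{n=1}^N I_n R_n ≤ c}, and let r* ∈ F minimize L(X,·) over F. Let 0 ≤ ε ≤ N. If r ∈ F satisfies Σ_{n=1}^N Σ_{i=1}^{R_n} (σ_i^(n))² ≥ (1 − ε/N) · max_{r'∈F} Σ_{n=1}^N Σ_{i=1}^{R'_n} (σ_i^(n))² (i.e., r is a (1−ε/N)-approximation to the Tucker packing problem with coefficients a_i^(n) = (σ_i^(n))²), then RRE(X,r) ≤ N · RRE(X,r*) + ε, where RRE(X,r) = L(X,r)/‖X‖_F². -/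
open scoped BigOperators
open Matrix

/-- Combine a fixed `n`-th coordinate with coordinates for the remaining modes. -/
def fullIdx {N : ℕ} {I : Fin N → ℕ} (n : Fin N) (i : Fin (I n))
    (j : ∀ m : {m : Fin N // m ≠ n}, Fin (I m.1)) : ∀ k, Fin (I k) :=
  fun k => if h : k = n then Fin.cast (congrArg I h).symm i else j ⟨k, h⟩

/-- Mode-`n` unfolding of a tensor. -/
def modeUnfold {N : ℕ} {I : Fin N → ℕ} (X : (∀ k, Fin (I k)) → ℝ) (n : Fin N) :
    Matrix (Fin (I n)) (∀ m : {m : Fin N // m ≠ n}, Fin (I m.1)) ℝ :=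
  fun i j => X (fullIdx n i j)

/-- Squared Frobenius norm of a tensor. -/
noncomputable def frobSq {N : ℕ} {I : Fin N → ℕ} (X : (∀ k, Fin (I k)) → ℝ) : ℝ :=
  ∑ i : ∀ k, Fin (I k), (X i) ^ 2

/-- Tucker/multilinear reconstruction `G ×₁ A 1 ×₂ ⋯ ×_N A N`. -/
noncomputable def tucker {N : ℕ} {I R : Fin N → ℕ} (G : (∀ k, Fin (R k)) → ℝ)
    (A : ∀ n, Matrix (Fin (I n)) (Fin (R n)) ℝ) : (∀ k, Fin (I k)) → ℝ :=
  fun i => ∑ j : ∀ k, Fin (R k), G j * ∏ n, A n (i n) (j n)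

/-- Optimal rank-`R` Tucker loss `L(X, R)`. -/
noncomputable def tuckerLoss {N : ℕ} (I : Fin N → ℕ) (X : (∀ k, Fin (I k)) → ℝ)
    (R : Fin N → ℕ) : ℝ :=
  sInf {v : ℝ | ∃ (G : (∀ k, Fin (R k)) → ℝ)
    (A : ∀ n, Matrix (Fin (I n)) (Fin (R n)) ℝ),
    v = frobSq (fun i => X i - tucker G A i)}

/-- `σ` lists the singular values of `M` in nonincreasing order:
entries are nonnegative, nonincreasing, and their squares are the eigenvalues
of the positive semidefinite matrix `M * Mᵀ` (up to a permutation). -/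
def IsSingularValues {k : ℕ} {c : Type*} [Fintype c]
    (M : Matrix (Fin k) c ℝ) (σ : Fin k → ℝ) : Prop :=
  (∀ i, 0 ≤ σ i) ∧ Antitone σ ∧
    ∃ e : Equiv.Perm (Fin k), ∀ i, σ i ^ 2 =
      (Matrix.isHermitian_mul_conjTranspose_self M).eigenvalues (e i)

/-- Truncation of a tensor to the leading `R`-block. -/
def truncate {N : ℕ} {I : Fin N → ℕ} (S : (∀ k, Fin (I k)) → ℝ)
    (R : Fin N → ℕ) : (∀ k, Fin (I k)) → ℝ :=
  fun i => if ∀ n, (i n : ℕ) < R n then S i else 0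

/-- Surrogate loss `L̃(X, R)`: sum of the squared tail singular values. -/
noncomputable def surrLoss {N : ℕ} {I : Fin N → ℕ} (σ : ∀ n, Fin (I n) → ℝ)
    (R : Fin N → ℕ) : ℝ :=
  ∑ n, ∑ i ∈ Finset.univ.filter (fun i : Fin (I n) => R n ≤ (i : ℕ)), σ n i ^ 2

/-- Packing objective: sum of the squared leading singular values. -/
noncomputable def packObj {N : ℕ} {I : Fin N → ℕ} (σ : ∀ n, Fin (I n) → ℝ)
    (R : Fin N → ℕ) : ℝ :=
  ∑ n, ∑ i ∈ Finset.univ.filter (fun i : Fin (I n) => (i : ℕ) < R n), σ n i ^ 2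

open Matrix Finset

namespace TuckerAux

/-- Squared Frobenius norm of a matrix. -/
noncomputable def frobM {m c : Type*} [Fintype m] [Fintype c] (A : Matrix m c ℝ) : ℝ :=
  ∑ i, ∑ j, A i j ^ 2

lemma frobM_nonneg {m c : Type*} [Fintype m] [Fintype c] (A : Matrix m c ℝ) :
    0 ≤ frobM A :=
  Finset.sum_nonneg fun _ _ => Finset.sum_nonneg fun _ _ => sq_nonneg _

lemma frobM_eq_trace {m c : Type*} [Fintype m] [Fintype c] (A : Matrix m c ℝ) :
    frobM A = Matrix.trace (A * Aᵀ) := by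
  unfold frobM Matrix.trace
  simp [Matrix.mul_apply, Matrix.diag, Matrix.transpose_apply, sq]

lemma trace_helper {k c : Type*} [Fintype k] [Fintype c]
    (P Q : Matrix k k ℝ) (Y : Matrix k c ℝ) :
    (P * Y * (Q * Y)ᵀ).trace = (Qᵀ * P * (Y * Yᵀ)).trace := by
  calc (P * Y * (Q * Y)ᵀ).trace = (P * Y * (Yᵀ * Qᵀ)).trace := by rw [transpose_mul]
    _ = ((P * Y * Yᵀ) * Qᵀ).trace := by rw [Matrix.mul_assoc (P * Y)]
    _ = (Qᵀ * (P * Y * Yᵀ)).trace := trace_mul_comm _ _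
    _ = (Qᵀ * P * (Y * Yᵀ)).trace := by rw [Matrix.mul_assoc P Y Yᵀ, ← Matrix.mul_assoc]

/-- Pythagoras for a symmetric idempotent `P`. -/
lemma frobM_proj_pythag {k c : Type*} [Fintype k] [DecidableEq k] [Fintype c]
    (P : Matrix k k ℝ) (hsym : Pᵀ = P) (hidem : P * P = P) (Y : Matrix k c ℝ) :
    frobM Y = frobM (P * Y) + frobM (Y - P * Y) := by
  rw [frobM_eq_trace, frobM_eq_trace, frobM_eq_trace]
  have e1 : (P * Y * (P * Y)ᵀ).trace = (P * (Y * Yᵀ)).trace := by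
    rw [trace_helper, hsym, hidem]
  have e2 : (Y * (P * Y)ᵀ).trace = (P * (Y * Yᵀ)).trace := by
    nth_rewrite 1 [← Matrix.one_mul Y]
    rw [trace_helper, hsym, Matrix.mul_one]
  have e3 : (P * Y * Yᵀ).trace = (P * (Y * Yᵀ)).trace := by rw [Matrix.mul_assoc]
  rw [Matrix.sub_mul, Matrix.transpose_sub, Matrix.mul_sub, Matrix.mul_sub,
    Matrix.trace_sub, Matrix.trace_sub, Matrix.trace_sub, e1, e2, e3]
  ring

lemma frobM_sub_proj {k c : Type*} [Fintype k] [DecidableEq k] [Fintype c]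
    (P : Matrix k k ℝ) (hsym : Pᵀ = P) (hidem : P * P = P) (Y : Matrix k c ℝ) :
    frobM (Y - P * Y) = (Y * Yᵀ).trace - (Y * Yᵀ * P).trace := by
  have h := frobM_proj_pythag P hsym hidem Y
  have e1 : frobM (P * Y) = (Y * Yᵀ * P).trace := by
    rw [frobM_eq_trace]
    rw [trace_helper, hsym, hidem, trace_mul_comm]
  rw [frobM_eq_trace] at h
  linarith

end TuckerAux

namespace TuckerAux

section Spectral
variable {k : ℕ} {c : Type*} [Fintype c] (M : Matrix (Fin k) c ℝ)

noncomputable def Umat : Matrix (Fin k) (Fin k) ℝ :=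
  ((Matrix.isHermitian_mul_conjTranspose_self M).eigenvectorUnitary : Matrix (Fin k) (Fin k) ℝ)

noncomputable def lam : Fin k → ℝ :=
  (Matrix.isHermitian_mul_conjTranspose_self M).eigenvalues

lemma Umat_star_mul : star (Umat M) * Umat M = 1 :=
  Matrix.mem_unitaryGroup_iff'.mp
    ((Matrix.isHermitian_mul_conjTranspose_self M).eigenvectorUnitary).2

lemma Umat_mul_star : Umat M * star (Umat M) = 1 :=
  Matrix.mem_unitaryGroup_iff.mp
    ((Matrix.isHermitian_mul_conjTranspose_self M).eigenvectorUnitary).2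

lemma spectral : M * Mᵀ = Umat M * Matrix.diagonal (lam M) * star (Umat M) := by
  have h := (Matrix.isHermitian_mul_conjTranspose_self M).spectral_theorem
  have hmap : Mᵀ.map (starRingEnd ℝ) = Mᵀ := by ext i j; simp
  simpa [Umat, lam, Matrix.conjTranspose, hmap] using h

lemma trace_mul_diag (V : Matrix (Fin k) (Fin k) ℝ) (f : Fin k → ℝ) :
    (V * Matrix.diagonal f).trace = ∑ i, V i i * f i := by
  simp [Matrix.trace, Matrix.diag, Matrix.mul_diagonal]

lemma trace_S_mul (P : Matrix (Fin k) (Fin k) ℝ) :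
    (M * Mᵀ * P).trace = ∑ i, lam M i * (star (Umat M) * P * Umat M) i i := by
  rw [spectral M]
  have : Umat M * Matrix.diagonal (lam M) * star (Umat M) * P
      = (Umat M * Matrix.diagonal (lam M)) * (star (Umat M) * P) := by
    rw [Matrix.mul_assoc (Umat M * Matrix.diagonal (lam M))]
  rw [this, trace_mul_comm, ← Matrix.mul_assoc, trace_mul_diag]
  exact Finset.sum_congr rfl (fun i _ => mul_comm _ _)

lemma trace_S : (M * Mᵀ).trace = ∑ i, lam M i := by
  rw [spectral M, Matrix.mul_assoc, trace_mul_comm, Matrix.mul_assoc, Umat_star_mul,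
    Matrix.mul_one]
  simp [Matrix.trace, Matrix.diag]

end Spectral

/-- Reindexing the head sum. -/
lemma sum_head {k : ℕ} (f : Fin k → ℝ) (R : ℕ) (hRk : R ≤ k) :
    ∑ i ∈ Finset.univ.filter (fun i : Fin k => (i : ℕ) < R), f i
      = ∑ j : Fin R, f (Fin.castLE hRk j) := by
  have hset : Finset.univ.filter (fun i : Fin k => (i : ℕ) < R)
      = (Finset.univ : Finset (Fin R)).map (Fin.castLEEmb hRk) := by
    ext i
    simp only [Finset.mem_filter, Finset.mem_univ, true_and, Finset.mem_map,
      Fin.castLEEmb_apply]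
    constructor
    · intro h; exact ⟨⟨(i : ℕ), h⟩, by ext; simp⟩
    · rintro ⟨j, rfl⟩; simpa using j.2
  rw [hset, Finset.sum_map]
  rfl

/-- Fractional knapsack bound. -/
lemma knapsack {k : ℕ} (R : ℕ) (s u : Fin k → ℝ) (hs : Antitone s)
    (hs0 : ∀ i, 0 ≤ s i) (hu0 : ∀ i, 0 ≤ u i) (hu1 : ∀ i, u i ≤ 1)
    (husum : ∑ i, u i ≤ R) :
    ∑ i, s i * u i ≤ ∑ i ∈ Finset.univ.filter (fun i : Fin k => (i : ℕ) < R), s i := by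
  rcases le_or_gt k R with hkR | hRk
  · have : Finset.univ.filter (fun i : Fin k => (i : ℕ) < R) = Finset.univ := by
      ext i; simp; exact lt_of_lt_of_le i.2 hkR
    rw [this]
    apply Finset.sum_le_sum
    intro i _
    nth_rewrite 2 [← mul_one (s i)]
    exact mul_le_mul_of_nonneg_left (hu1 i) (hs0 i)
  · set θ := s ⟨R, hRk⟩ with hθ
    have hθ0 : 0 ≤ θ := hs0 _
    have hcard : ((Finset.univ.filter (fun i : Fin k => (i : ℕ) < R)).card : ℝ) = R := by
      rw [show (Finset.univ.filter (fun i : Fin k => (i : ℕ) < R)).card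
          = ∑ i ∈ Finset.univ.filter (fun i : Fin k => (i : ℕ) < R), 1 from
          (Finset.card_eq_sum_ones _)]
      push_cast
      rw [sum_head (fun _ => (1:ℝ)) R hRk.le]
      simp
    have key : ∑ i, s i * u i - ∑ i ∈ Finset.univ.filter (fun i : Fin k => (i : ℕ) < R), s i
        ≤ θ * (∑ i, u i - R) := by
      rw [← Finset.sum_filter_add_sum_filter_not Finset.univ
        (fun i : Fin k => (i : ℕ) < R) (fun i => s i * u i),
        ← Finset.sum_filter_add_sum_filter_not Finset.univ
        (fun i : Fin k => (i : ℕ) < R) u, ← hcard,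
        Finset.card_eq_sum_ones]
      push_cast
      rw [mul_sub, mul_add, Finset.mul_sum, Finset.mul_sum, Finset.mul_sum]
      have h1 : ∀ i ∈ Finset.univ.filter (fun i : Fin k => (i : ℕ) < R),
          s i * u i - s i ≤ θ * u i - θ * 1 := by
        intro i hi
        have hiR : (i : ℕ) < R := (Finset.mem_filter.mp hi).2
        have hsθ : θ ≤ s i := hs (by simp [Fin.le_def]; omega)
        nlinarith [hu1 i, hu0 i]
      have h2 : ∀ i ∈ Finset.univ.filter (fun i : Fin k => ¬ (i : ℕ) < R),
          s i * u i ≤ θ * u i := by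
        intro i hi
        have hiR : ¬ (i : ℕ) < R := (Finset.mem_filter.mp hi).2
        have hsθ : s i ≤ θ := hs (by simp [Fin.le_def]; omega)
        exact mul_le_mul_of_nonneg_right hsθ (hu0 i)
      have := Finset.sum_le_sum h1
      have := Finset.sum_le_sum h2
      simp only [Finset.sum_sub_distrib] at *
      linarith
    nlinarith [mul_nonneg hθ0 (sub_nonneg.mpr husum), key]

end TuckerAux
section CPart
open Matrix Finset
namespace TuckerAux

lemma star_eq_transpose {k c : Type*} [Fintype k] (A : Matrix k c ℝ) :
    Aᴴ = Aᵀ := by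
  ext i j; simp [Matrix.conjTranspose_apply]

lemma sq_antitone {k : ℕ} (σ : Fin k → ℝ) (h0 : ∀ i, 0 ≤ σ i) (ha : Antitone σ) :
    Antitone (fun i => σ i ^ 2) := by
  intro i j hij
  have := ha hij
  have := h0 j
  simp only
  nlinarith

lemma filter_ge_eq_not_lt {k R : ℕ} :
    Finset.univ.filter (fun i : Fin k => R ≤ (i : ℕ))
      = Finset.univ.filter (fun i : Fin k => ¬ (i : ℕ) < R) := by
  simp [not_lt]

lemma sum_split {k R : ℕ} (f : Fin k → ℝ) :
    ∑ i, f i = (∑ i ∈ Finset.univ.filter (fun i : Fin k => (i : ℕ) < R), f i)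
      + ∑ i ∈ Finset.univ.filter (fun i : Fin k => R ≤ (i : ℕ)), f i := by
  rw [filter_ge_eq_not_lt]
  exact (Finset.sum_filter_add_sum_filter_not _ _ _).symm

/-- Eckart–Young-type lower bound. -/
lemma tail_le_frobM_sub {k : ℕ} {c : Type*} [Fintype c] (M : Matrix (Fin k) c ℝ)
    (σ : Fin k → ℝ) (hσ : IsSingularValues M σ) (R : ℕ)
    (B : Matrix (Fin k) c ℝ) (P : Matrix (Fin k) (Fin k) ℝ)
    (hsym : Pᵀ = P) (hidem : P * P = P) (hPB : P * B = B)
    (htr : Matrix.trace P ≤ (R : ℝ)) :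
    ∑ i ∈ Finset.univ.filter (fun i : Fin k => R ≤ (i : ℕ)), σ i ^ 2
      ≤ frobM (M - B) := by
  obtain ⟨hσ0, hσa, e, he⟩ := hσ
  have he' : ∀ i, σ i ^ 2 = lam M (e i) := he
  set U := Umat M with hU
  have hUt : star U = Uᵀ := star_eq_transpose U
  have hUtU : Uᵀ * U = 1 := by rw [← hUt]; exact Umat_star_mul M
  have hUUt : U * Uᵀ = 1 := by rw [← hUt]; exact Umat_mul_star M
  -- step 1: frobM (M - B) ≥ frobM (M - P * M)
  have step1 : frobM (M - P * M) ≤ frobM (M - B) := by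
    have h := frobM_proj_pythag P hsym hidem (M - B)
    have heq : (M - B) - P * (M - B) = M - P * M := by
      rw [Matrix.mul_sub, hPB]
      abel
    rw [heq] at h
    have := frobM_nonneg (P * (M - B))
    linarith
  refine le_trans ?_ step1
  rw [frobM_sub_proj P hsym hidem M, trace_S M, trace_S_mul M P]
  set V : Matrix (Fin k) (Fin k) ℝ := star U * P * U with hV
  have hVt : Vᵀ = V := by
    rw [hV, hUt, Matrix.transpose_mul, Matrix.transpose_mul, Matrix.transpose_transpose,
      hsym, Matrix.mul_assoc]
  have hVV : V * V = V := by
    rw [hV, hUt]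
    simp only [Matrix.mul_assoc]
    rw [← Matrix.mul_assoc U Uᵀ, hUUt, Matrix.one_mul, ← Matrix.mul_assoc P P, hidem]
  have hdiag : ∀ i, V i i = ∑ j, V i j ^ 2 := by
    intro i
    conv_lhs => rw [← hVV]
    rw [Matrix.mul_apply]
    refine Finset.sum_congr rfl fun j _ => ?_
    rw [sq]
    congr 1
    calc V j i = Vᵀ i j := rfl
      _ = V i j := by rw [hVt]
  have hd0 : ∀ i, 0 ≤ V i i := by
    intro i
    rw [hdiag]
    exact Finset.sum_nonneg fun _ _ => sq_nonneg _
  have hd1 : ∀ i, V i i ≤ 1 := by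
    intro i
    have h2 : V i i ^ 2 ≤ V i i := by
      conv_rhs => rw [hdiag i]
      exact Finset.single_le_sum (f := fun j => V i j ^ 2)
        (fun j _ => sq_nonneg _) (Finset.mem_univ i)
    nlinarith [hd0 i]
  have hdsum : ∑ i, V i i ≤ (R : ℝ) := by
    have : ∑ i, V i i = Matrix.trace P := by
      have : Matrix.trace V = Matrix.trace P := by
        rw [hV, hUt, trace_mul_comm, ← Matrix.mul_assoc, Matrix.mul_assoc U Uᵀ P,
          ← Matrix.mul_assoc U, hUUt, Matrix.one_mul]
      simpa [Matrix.trace, Matrix.diag] using this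
    rw [this]; exact htr
  -- knapsack
  have hknap : ∑ i, lam M i * V i i
      ≤ ∑ i ∈ Finset.univ.filter (fun i : Fin k => (i : ℕ) < R), σ i ^ 2 := by
    have hre : ∑ i, lam M i * V i i = ∑ i, σ i ^ 2 * V (e i) (e i) := by
      rw [← Equiv.sum_comp e (fun i => lam M i * V i i)]
      exact Finset.sum_congr rfl fun i _ => by rw [← he' i]
    rw [hre]
    exact knapsack R (fun i => σ i ^ 2) (fun i => V (e i) (e i))
      (sq_antitone σ hσ0 hσa) (fun i => sq_nonneg _) (fun i => hd0 _) (fun i => hd1 _)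
      (by rw [Equiv.sum_comp e (fun i => V i i)]; exact hdsum)
  have hlam : ∑ i, lam M i = ∑ i, σ i ^ 2 := by
    rw [← Equiv.sum_comp e (lam M)]
    exact Finset.sum_congr rfl fun i _ => (he' i).symm
  rw [hlam]
  rw [sum_split (R := R) (fun i => σ i ^ 2)]
  linarith

/-- HOSVD-type truncation: orthonormal columns achieving the tail bound. -/
lemma exists_cols {k : ℕ} {c : Type*} [Fintype c] (M : Matrix (Fin k) c ℝ)
    (σ : Fin k → ℝ) (hσ : IsSingularValues M σ) (R : ℕ) (hRk : R ≤ k) :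
    ∃ A : Matrix (Fin k) (Fin R) ℝ, Aᵀ * A = 1 ∧
      frobM (M - (A * Aᵀ) * M)
        ≤ ∑ i ∈ Finset.univ.filter (fun i : Fin k => R ≤ (i : ℕ)), σ i ^ 2 := by
  obtain ⟨hσ0, hσa, e, he⟩ := hσ
  have he' : ∀ i, σ i ^ 2 = lam M (e i) := he
  set U := Umat M with hU
  have hUt : star U = Uᵀ := star_eq_transpose U
  have hUtU : Uᵀ * U = 1 := by rw [← hUt]; exact Umat_star_mul M
  have hUUt : U * Uᵀ = 1 := by rw [← hUt]; exact Umat_mul_star M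
  set A : Matrix (Fin k) (Fin R) ℝ := fun i j => U i (e (Fin.castLE hRk j)) with hA
  have hinj : Function.Injective (fun j : Fin R => e (Fin.castLE hRk j)) :=
    fun a b hab => Fin.castLE_injective hRk (e.injective hab)
  have hAtA : Aᵀ * A = 1 := by
    ext j j'
    have : (Aᵀ * A) j j' = (Uᵀ * U) (e (Fin.castLE hRk j)) (e (Fin.castLE hRk j')) := by
      rw [Matrix.mul_apply, Matrix.mul_apply]
      rfl
    rw [this, hUtU]
    by_cases hjj : j = j'
    · subst hjj; simp
    · rw [Matrix.one_apply_ne (fun hcon => hjj (hinj hcon)),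
        Matrix.one_apply_ne hjj]
  refine ⟨A, hAtA, ?_⟩
  have hsym : (A * Aᵀ)ᵀ = A * Aᵀ := by
    rw [Matrix.transpose_mul, Matrix.transpose_transpose]
  have hidem : (A * Aᵀ) * (A * Aᵀ) = A * Aᵀ := by
    rw [Matrix.mul_assoc A Aᵀ (A * Aᵀ), ← Matrix.mul_assoc Aᵀ A Aᵀ, hAtA,
      Matrix.one_mul]
  rw [frobM_sub_proj (A * Aᵀ) hsym hidem M, trace_S M, trace_S_mul M (A * Aᵀ)]
  -- compute V = Uᵀ (A Aᵀ) U
  have hW : ∀ (a : Fin k) (j : Fin R),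
      (Uᵀ * A) a j = (1 : Matrix (Fin k) (Fin k) ℝ) a (e (Fin.castLE hRk j)) := by
    intro a j
    rw [← hUtU]
    simp [Matrix.mul_apply, hA]
    rfl
  have hVdiag : ∀ a, (star U * (A * Aᵀ) * U) a a
      = ∑ j : Fin R, ((1 : Matrix (Fin k) (Fin k) ℝ) a (e (Fin.castLE hRk j))) ^ 2 := by
    intro a
    have h1 : star U * (A * Aᵀ) * U = (Uᵀ * A) * (Uᵀ * A)ᵀ := by
      rw [hUt, Matrix.transpose_mul, Matrix.transpose_transpose,
        ← Matrix.mul_assoc, Matrix.mul_assoc (Uᵀ * A) Aᵀ U]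
    rw [h1, Matrix.mul_apply]
    refine Finset.sum_congr rfl fun j _ => ?_
    rw [Matrix.transpose_apply, hW, sq]
  have hsum : ∑ a, lam M a * (star U * (A * Aᵀ) * U) a a
      = ∑ i ∈ Finset.univ.filter (fun i : Fin k => (i : ℕ) < R), σ i ^ 2 := by
    calc ∑ a, lam M a * (star U * (A * Aᵀ) * U) a a
        = ∑ a, ∑ j : Fin R,
            lam M a * ((1 : Matrix (Fin k) (Fin k) ℝ) a (e (Fin.castLE hRk j))) ^ 2 := by
          refine Finset.sum_congr rfl fun a _ => ?_
          rw [hVdiag, Finset.mul_sum]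
      _ = ∑ j : Fin R, ∑ a,
            lam M a * ((1 : Matrix (Fin k) (Fin k) ℝ) a (e (Fin.castLE hRk j))) ^ 2 :=
          Finset.sum_comm
      _ = ∑ j : Fin R, lam M (e (Fin.castLE hRk j)) := by
          refine Finset.sum_congr rfl fun j _ => ?_
          rw [Finset.sum_eq_single_of_mem (e (Fin.castLE hRk j)) (Finset.mem_univ _)
            (fun b _ hb => by rw [Matrix.one_apply_ne hb]; ring)]
          simp
      _ = ∑ j : Fin R, σ (Fin.castLE hRk j) ^ 2 :=
          Finset.sum_congr rfl fun j _ => (he' _).symm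
      _ = ∑ i ∈ Finset.univ.filter (fun i : Fin k => (i : ℕ) < R), σ i ^ 2 :=
          (sum_head (fun i => σ i ^ 2) R hRk).symm
  rw [hsum]
  have hlam : ∑ i, lam M i = ∑ i, σ i ^ 2 := by
    rw [← Equiv.sum_comp e (lam M)]
    exact Finset.sum_congr rfl fun i _ => (he' i).symm
  rw [hlam, sum_split (R := R) (fun i => σ i ^ 2)]
  linarith

end TuckerAux
end CPart
section DPart
open Matrix Finset
open scoped RealInnerProductSpace
namespace TuckerAux

lemma euclid_inner_eq {k : ℕ} (x y : EuclideanSpace ℝ (Fin k)) :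
    ⟪x, y⟫ = ∑ i, x i * y i := by
  simp [PiLp.inner_apply, RCLike.inner_apply, conj_trivial]
  exact Finset.sum_congr rfl fun _ _ => mul_comm _ _

/-- Orthogonal projection onto the column space of `A`, as a matrix. -/
lemma exists_proj_of_factor {k R : ℕ} (A : Matrix (Fin k) (Fin R) ℝ) :
    ∃ P : Matrix (Fin k) (Fin k) ℝ, Pᵀ = P ∧ P * P = P ∧ Matrix.trace P ≤ (R : ℝ) ∧
      ∀ {c : Type} [Fintype c] (C : Matrix (Fin R) c ℝ), P * (A * C) = A * C := by
  classical
  set f : EuclideanSpace ℝ (Fin R) →ₗ[ℝ] EuclideanSpace ℝ (Fin k) :=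
    Matrix.toEuclideanLin A with hf
  set K : Submodule ℝ (EuclideanSpace ℝ (Fin k)) := LinearMap.range f with hK
  have hdim : Module.finrank ℝ K ≤ R := by
    have h := LinearMap.finrank_range_le f
    simpa [finrank_euclideanSpace] using h
  set d := Module.finrank ℝ K with hd
  set b := stdOrthonormalBasis ℝ K with hb
  set v : Fin d → (Fin k → ℝ) := fun t => ((b t : K) : EuclideanSpace ℝ (Fin k)) with hv
  have hortho : ∀ t t', ∑ i, v t i * v t' i = if t = t' then 1 else 0 := by
    intro t t'
    have key : (inner ℝ (b t) (b t') : ℝ) = ∑ i, v t i * v t' i := by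
      rw [Submodule.coe_inner, euclid_inner_eq]
    by_cases htt : t = t'
    · subst htt
      rw [if_pos rfl, ← key]
      have h1 : ‖b t‖ = 1 := b.orthonormal.1 t
      rw [real_inner_self_eq_norm_sq, h1]; norm_num
    · rw [if_neg htt, ← key]
      exact b.orthonormal.2 htt
  set P : Matrix (Fin k) (Fin k) ℝ := Matrix.of fun i i' => ∑ t, v t i * v t i' with hP
  have hPapp : ∀ i i', P i i' = ∑ t, v t i * v t i' := fun i i' => rfl
  have hsym : Pᵀ = P := by
    ext i i'; rw [Matrix.transpose_apply, hPapp, hPapp]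
    exact Finset.sum_congr rfl fun t _ => mul_comm _ _
  have hidem : P * P = P := by
    ext i i'
    rw [Matrix.mul_apply, hPapp]
    calc ∑ j, P i j * P j i'
        = ∑ j, ∑ t, ∑ t', (v t i * v t j) * (v t' j * v t' i') := by
          refine Finset.sum_congr rfl fun j _ => ?_
          rw [hPapp, hPapp, Finset.sum_mul_sum]
      _ = ∑ t, ∑ t', ∑ j, (v t i * v t j) * (v t' j * v t' i') := by
          rw [Finset.sum_comm]
          exact Finset.sum_congr rfl fun t _ => Finset.sum_comm
      _ = ∑ t, ∑ t', (v t i * v t' i') * ∑ j, v t j * v t' j := by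
          refine Finset.sum_congr rfl fun t _ => Finset.sum_congr rfl fun t' _ => ?_
          rw [Finset.mul_sum]
          exact Finset.sum_congr rfl fun j _ => by ring
      _ = ∑ t, v t i * v t i' := by
          refine Finset.sum_congr rfl fun t _ => ?_
          rw [Finset.sum_congr rfl fun t' (_ : t' ∈ Finset.univ) => by rw [hortho t t']]
          simp
  have htr : Matrix.trace P ≤ (R : ℝ) := by
    have : Matrix.trace P = (d : ℝ) := by
      unfold Matrix.trace Matrix.diag
      calc ∑ i, P i i = ∑ i, ∑ t, v t i * v t i := Finset.sum_congr rfl fun i _ => hPapp i i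
        _ = ∑ t, ∑ i, v t i * v t i := Finset.sum_comm
        _ = ∑ t : Fin d, (1 : ℝ) := by
            refine Finset.sum_congr rfl fun t _ => ?_
            rw [hortho t t, if_pos rfl]
        _ = (d : ℝ) := by simp
    rw [this]
    exact_mod_cast hdim
  have hrepr : ∀ x : EuclideanSpace ℝ (Fin k), x ∈ K →
      ∀ i, ∑ i', P i i' * x i' = x i := by
    intro x hx i
    have hxK : ((⟨x, hx⟩ : K) : EuclideanSpace ℝ (Fin k)) = x := rfl
    have hs := b.sum_repr (⟨x, hx⟩ : K)
    have hcoe : ∑ t, b.repr (⟨x, hx⟩ : K) t • v t = x := by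
      have h2 := congrArg (fun z : K => (z : EuclideanSpace ℝ (Fin k))) hs
      simpa [hv] using congrArg WithLp.ofLp h2
    have hval : ∀ t, b.repr (⟨x, hx⟩ : K) t = ∑ i', v t i' * x i' := by
      intro t
      rw [OrthonormalBasis.repr_apply_apply, Submodule.coe_inner, euclid_inner_eq]
      try rfl
    have hxi : x i = ∑ t, (∑ i', v t i' * x i') * v t i := by
      conv_lhs => rw [← hcoe]
      rw [Finset.sum_apply]
      refine Finset.sum_congr rfl fun t _ => ?_
      rw [hval t]
      simp [Pi.smul_apply, smul_eq_mul]
    rw [hxi]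
    calc ∑ i', P i i' * x i' = ∑ i', ∑ t, (v t i * v t i') * x i' := by
          refine Finset.sum_congr rfl fun i' _ => ?_
          rw [hPapp, Finset.sum_mul]
      _ = ∑ t, ∑ i', (v t i * v t i') * x i' := Finset.sum_comm
      _ = ∑ t, (∑ i', v t i' * x i') * v t i := by
          refine Finset.sum_congr rfl fun t _ => ?_
          rw [Finset.sum_mul]
          exact Finset.sum_congr rfl fun i' _ => by ring
  refine ⟨P, hsym, hidem, htr, ?_⟩
  intro c _ C
  ext i j
  have hcol : WithLp.toLp 2 (fun i' => (A * C) i' j) ∈ K := by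
    refine ⟨WithLp.toLp 2 (fun t => C t j), ?_⟩
    ext i'
    simp [hf, Matrix.toEuclideanLin_apply, Matrix.mulVec, dotProduct, Matrix.mul_apply]
  have := hrepr (WithLp.toLp 2 (fun i' => (A * C) i' j)) hcol i
  rw [Matrix.mul_apply]
  exact this

end TuckerAux
end DPart
section EPart
open Matrix Finset
namespace TuckerAux
variable {N : ℕ} {I : Fin N → ℕ}

lemma fullIdx_same (n : Fin N) (i : Fin (I n)) (j : ∀ m : {m : Fin N // m ≠ n}, Fin (I m.1)) :
    fullIdx n i j n = i := by
  simp [fullIdx]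

lemma fullIdx_ne (n : Fin N) (i : Fin (I n)) (j : ∀ m : {m : Fin N // m ≠ n}, Fin (I m.1))
    (m : Fin N) (h : m ≠ n) : fullIdx n i j m = j ⟨m, h⟩ := by
  simp [fullIdx, h]

lemma fullIdx_self (n : Fin N) (i : ∀ k, Fin (I k)) :
    fullIdx n (i n) (fun m => i m.1) = i := by
  funext k
  by_cases h : k = n
  · subst h; exact fullIdx_same _ _ _
  · exact fullIdx_ne _ _ _ _ h

/-- Index equivalence realizing the mode-`n` unfolding. -/
def idxEquiv (n : Fin N) :
    (∀ k, Fin (I k)) ≃ Fin (I n) × (∀ m : {m : Fin N // m ≠ n}, Fin (I m.1)) where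
  toFun i := (i n, fun m => i m.1)
  invFun p := fullIdx n p.1 p.2
  left_inv i := fullIdx_self n i
  right_inv p := by
    obtain ⟨a, j⟩ := p
    exact Prod.ext (fullIdx_same n a j) (funext fun m => fullIdx_ne n a j m.1 m.2)

lemma frobSq_nonneg (X : (∀ k, Fin (I k)) → ℝ) : 0 ≤ frobSq X :=
  Finset.sum_nonneg fun _ _ => sq_nonneg _

lemma frobSq_eq_frobM (X : (∀ k, Fin (I k)) → ℝ) (n : Fin N) :
    frobSq X = frobM (modeUnfold X n) := by
  unfold frobSq frobM
  rw [Fintype.sum_equiv (idxEquiv n) _ (fun p => (X (fullIdx n p.1 p.2)) ^ 2)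
    (fun i => by
      show X i ^ 2 = X (fullIdx n (i n) (fun m => i m.1)) ^ 2
      rw [fullIdx_self])]
  rw [Fintype.sum_prod_type]
  rfl

/-- Apply a square matrix in every mode. -/
noncomputable def modeAll (P : ∀ n, Matrix (Fin (I n)) (Fin (I n)) ℝ)
    (X : (∀ k, Fin (I k)) → ℝ) : (∀ k, Fin (I k)) → ℝ :=
  fun i => ∑ i' : ∀ k, Fin (I k), (∏ n, P n (i n) (i' n)) * X i'

lemma prod_one_matrix (i i' : ∀ k, Fin (I k)) :
    (∏ n, (1 : Matrix (Fin (I n)) (Fin (I n)) ℝ) (i n) (i' n))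
      = if i = i' then 1 else 0 := by
  by_cases h : i = i'
  · subst h; simp
  · rw [if_neg h]
    obtain ⟨n, hn⟩ : ∃ n, i n ≠ i' n := by
      by_contra hcon
      push_neg at hcon
      exact h (funext hcon)
    exact Finset.prod_eq_zero (Finset.mem_univ n) (Matrix.one_apply_ne hn)

lemma modeAll_one (X : (∀ k, Fin (I k)) → ℝ) :
    modeAll (fun n => (1 : Matrix (Fin (I n)) (Fin (I n)) ℝ)) X = X := by
  funext i
  unfold modeAll
  rw [Finset.sum_congr rfl fun i' _ => by rw [prod_one_matrix i i']]
  simp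

lemma modeAll_comp (P Q : ∀ n, Matrix (Fin (I n)) (Fin (I n)) ℝ)
    (X : (∀ k, Fin (I k)) → ℝ) :
    modeAll P (modeAll Q X) = modeAll (fun n => P n * Q n) X := by
  funext i
  simp only [modeAll]
  have step1 : ∀ i' : ∀ k, Fin (I k),
      (∏ n, P n (i n) (i' n)) * ∑ i'', (∏ n, Q n (i' n) (i'' n)) * X i''
      = ∑ i'', (∏ n, P n (i n) (i' n) * Q n (i' n) (i'' n)) * X i'' := by
    intro i'
    rw [Finset.mul_sum]
    refine Finset.sum_congr rfl fun i'' _ => ?_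
    rw [← mul_assoc, ← Finset.prod_mul_distrib]
  rw [Finset.sum_congr rfl fun i' _ => step1 i']
  rw [Finset.sum_comm]
  refine Finset.sum_congr rfl fun i'' _ => ?_
  rw [← Finset.sum_mul]
  congr 1
  have hps : (∏ n, (P n * Q n) (i n) (i'' n))
      = ∑ i' ∈ Fintype.piFinset (fun n => (Finset.univ : Finset (Fin (I n)))),
          ∏ n, P n (i n) (i' n) * Q n (i' n) (i'' n) := by
    have h := Finset.prod_univ_sum (fun n : Fin N => (Finset.univ : Finset (Fin (I n))))
      (fun n t => P n (i n) t * Q n t (i'' n))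
    rw [← h]
    exact Finset.prod_congr rfl fun n _ => Matrix.mul_apply
  rw [hps, Fintype.piFinset_univ]

lemma modeAll_sub (P : ∀ n, Matrix (Fin (I n)) (Fin (I n)) ℝ)
    (X Y : (∀ k, Fin (I k)) → ℝ) :
    modeAll P (fun i => X i - Y i) = fun i => modeAll P X i - modeAll P Y i := by
  funext i
  unfold modeAll
  rw [← Finset.sum_sub_distrib]
  exact Finset.sum_congr rfl fun i' _ => by ring

/-- Tensor dot product. -/
noncomputable def tdot (X Y : (∀ k, Fin (I k)) → ℝ) : ℝ := ∑ i, X i * Y i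

lemma frobSq_eq_tdot (X : (∀ k, Fin (I k)) → ℝ) : frobSq X = tdot X X := by
  unfold frobSq tdot
  exact Finset.sum_congr rfl fun i _ => sq (X i)

lemma modeAll_adjoint (P : ∀ n, Matrix (Fin (I n)) (Fin (I n)) ℝ)
    (X Y : (∀ k, Fin (I k)) → ℝ) :
    tdot (modeAll P X) Y = tdot X (modeAll (fun n => (P n)ᵀ) Y) := by
  unfold tdot modeAll
  calc ∑ i, (∑ i', (∏ n, P n (i n) (i' n)) * X i') * Y i
      = ∑ i, ∑ i', X i' * ((∏ n, P n (i n) (i' n)) * Y i) := by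
        refine Finset.sum_congr rfl fun i _ => ?_
        rw [Finset.sum_mul]
        exact Finset.sum_congr rfl fun i' _ => by ring
    _ = ∑ i', X i' * ∑ i, (∏ n, P n (i n) (i' n)) * Y i := by
        rw [Finset.sum_comm]
        exact Finset.sum_congr rfl fun i' _ => (Finset.mul_sum _ _ _).symm
    _ = ∑ i', X i' * ∑ i, (∏ n, (P n)ᵀ (i' n) (i n)) * Y i := rfl

lemma tensor_pythag (P : ∀ n, Matrix (Fin (I n)) (Fin (I n)) ℝ)
    (hsym : ∀ n, (P n)ᵀ = P n) (hidem : ∀ n, P n * P n = P n)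
    (X : (∀ k, Fin (I k)) → ℝ) :
    frobSq (fun i => X i - modeAll P X i) = frobSq X - frobSq (modeAll P X) := by
  have hTT : tdot (modeAll P X) (modeAll P X) = tdot X (modeAll P X) := by
    rw [modeAll_adjoint]
    rw [show (fun n => (P n)ᵀ) = P from funext hsym]
    rw [modeAll_comp]
    rw [show (fun n => P n * P n) = P from funext hidem]
  have hexp : frobSq (fun i => X i - modeAll P X i)
      = tdot X X - 2 * tdot X (modeAll P X) + tdot (modeAll P X) (modeAll P X) := by
    unfold frobSq tdot
    rw [Finset.mul_sum, ← Finset.sum_sub_distrib, ← Finset.sum_add_distrib]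
    exact Finset.sum_congr rfl fun i _ => by ring
  rw [hexp, frobSq_eq_tdot X, frobSq_eq_tdot (modeAll P X), hTT]
  ring

lemma modeAll_nonexpansive (P : ∀ n, Matrix (Fin (I n)) (Fin (I n)) ℝ)
    (hsym : ∀ n, (P n)ᵀ = P n) (hidem : ∀ n, P n * P n = P n)
    (X : (∀ k, Fin (I k)) → ℝ) :
    frobSq (modeAll P X) ≤ frobSq X := by
  have h := tensor_pythag P hsym hidem X
  have h2 := frobSq_nonneg (fun i => X i - modeAll P X i)
  linarith

end TuckerAux
end EPart
section FPart
open Matrix Finset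
namespace TuckerAux
variable {N : ℕ} {I : Fin N → ℕ}

/-- Restrict a family of matrices to a finset of modes (identity elsewhere). -/
noncomputable def Ps (P : ∀ n, Matrix (Fin (I n)) (Fin (I n)) ℝ) (s : Finset (Fin N)) :
    ∀ n, Matrix (Fin (I n)) (Fin (I n)) ℝ :=
  fun m => if m ∈ s then P m else 1

lemma Ps_sym (P : ∀ n, Matrix (Fin (I n)) (Fin (I n)) ℝ)
    (hsym : ∀ n, (P n)ᵀ = P n) (s : Finset (Fin N)) (n : Fin N) : (Ps P s n)ᵀ = Ps P s n := by
  unfold Ps; split_ifs with h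
  · exact hsym n
  · exact Matrix.transpose_one

lemma Ps_idem (P : ∀ n, Matrix (Fin (I n)) (Fin (I n)) ℝ)
    (hidem : ∀ n, P n * P n = P n) (s : Finset (Fin N)) (n : Fin N) :
    Ps P s n * Ps P s n = Ps P s n := by
  unfold Ps; split_ifs with h
  · exact hidem n
  · exact Matrix.one_mul 1

lemma Ps_univ (P : ∀ n, Matrix (Fin (I n)) (Fin (I n)) ℝ) : Ps P Finset.univ = P := by
  funext m; simp [Ps]

lemma Ps_empty (P : ∀ n, Matrix (Fin (I n)) (Fin (I n)) ℝ) :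
    Ps P (∅ : Finset (Fin N)) = fun _ => 1 := by
  funext m; simp [Ps]

lemma Ps_insert (P : ∀ n, Matrix (Fin (I n)) (Fin (I n)) ℝ) (n : Fin N)
    (s : Finset (Fin N)) (hn : n ∉ s) :
    Ps P (insert n s) = fun m => Ps P {n} m * Ps P s m := by
  funext m
  by_cases h1 : m = n
  · subst h1
    simp [Ps, hn]
  · by_cases h2 : m ∈ s <;> simp [Ps, h1, h2]

lemma Ps_comm (P : ∀ n, Matrix (Fin (I n)) (Fin (I n)) ℝ) (n : Fin N) (s : Finset (Fin N)) :
    (fun m => Ps P {n} m * Ps P s m) = fun m => Ps P s m * Ps P {n} m := by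
  funext m
  unfold Ps
  split_ifs <;> simp

lemma hosvd_sum_bound (P : ∀ n, Matrix (Fin (I n)) (Fin (I n)) ℝ)
    (hsym : ∀ n, (P n)ᵀ = P n) (hidem : ∀ n, P n * P n = P n)
    (X : (∀ k, Fin (I k)) → ℝ) :
    frobSq (fun i => X i - modeAll P X i)
      ≤ ∑ n, frobSq (fun i => X i - modeAll (Ps P {n}) X i) := by
  have claim : ∀ s : Finset (Fin N), frobSq X - frobSq (modeAll (Ps P s) X)
      ≤ ∑ n ∈ s, (frobSq X - frobSq (modeAll (Ps P {n}) X)) := by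
    intro s
    induction s using Finset.induction with
    | empty =>
      rw [Ps_empty, modeAll_one]
      simp
    | @insert n s hn ih =>
      set Y := modeAll (Ps P s) X with hY
      have h1 : modeAll (Ps P (insert n s)) X = modeAll (Ps P {n}) Y := by
        rw [hY, modeAll_comp, ← Ps_insert P n s hn]
      have hcomm : modeAll (Ps P {n}) (modeAll (Ps P s) X)
          = modeAll (Ps P s) (modeAll (Ps P {n}) X) := by
        rw [modeAll_comp, modeAll_comp, Ps_comm]
      have hpyY : frobSq (fun i => Y i - modeAll (Ps P {n}) Y i)
          = frobSq Y - frobSq (modeAll (Ps P {n}) Y) :=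
        tensor_pythag _ (Ps_sym P hsym _) (Ps_idem P hidem _) Y
      have hswap : (fun i => Y i - modeAll (Ps P {n}) Y i)
          = modeAll (Ps P s) (fun i => X i - modeAll (Ps P {n}) X i) := by
        rw [modeAll_sub]
        funext i
        rw [hY, hcomm]
      have hle : frobSq (modeAll (Ps P s) (fun i => X i - modeAll (Ps P {n}) X i))
          ≤ frobSq (fun i => X i - modeAll (Ps P {n}) X i) :=
        modeAll_nonexpansive _ (Ps_sym P hsym _) (Ps_idem P hidem _) _
      have hpyX : frobSq (fun i => X i - modeAll (Ps P {n}) X i)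
          = frobSq X - frobSq (modeAll (Ps P {n}) X) :=
        tensor_pythag _ (Ps_sym P hsym _) (Ps_idem P hidem _) X
      have hleY : frobSq Y ≤ frobSq X :=
        modeAll_nonexpansive _ (Ps_sym P hsym _) (Ps_idem P hidem _) X
      rw [Finset.sum_insert hn, h1]
      rw [hswap] at hpyY
      linarith
  have hfin := claim Finset.univ
  rw [Ps_univ] at hfin
  have hmain : frobSq (fun i => X i - modeAll P X i)
      = frobSq X - frobSq (modeAll P X) := tensor_pythag P hsym hidem X
  have hterm : ∀ n, frobSq X - frobSq (modeAll (Ps P {n}) X)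
      = frobSq (fun i => X i - modeAll (Ps P {n}) X i) := fun n =>
    (tensor_pythag _ (Ps_sym P hsym _) (Ps_idem P hidem _) X).symm
  rw [hmain]
  calc frobSq X - frobSq (modeAll P X)
      ≤ ∑ n, (frobSq X - frobSq (modeAll (Ps P {n}) X)) := hfin
    _ = ∑ n, frobSq (fun i => X i - modeAll (Ps P {n}) X i) :=
        Finset.sum_congr rfl fun n _ => hterm n

lemma prod_one_family {ι : Type*} [Fintype ι] {κ : ι → ℕ} (x y : ∀ m : ι, Fin (κ m)) :
    (∏ m, (1 : Matrix (Fin (κ m)) (Fin (κ m)) ℝ) (x m) (y m)) = if x = y then 1 else 0 := by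
  by_cases h : x = y
  · subst h; simp
  · rw [if_neg h]
    obtain ⟨m, hm⟩ : ∃ m, x m ≠ y m := by
      by_contra hcon
      push_neg at hcon
      exact h (funext hcon)
    exact Finset.prod_eq_zero (Finset.mem_univ m) (Matrix.one_apply_ne hm)

/-- Splitting a product over all modes at mode `n`. -/
lemma prod_split (n : Fin N) (g : ∀ m : Fin N, ℝ) :
    (∏ m, g m) = g n * ∏ m : {m : Fin N // m ≠ n}, g m.1 := by
  rw [Fintype.prod_eq_mul_prod_compl n g]
  congr 1
  exact Finset.prod_subtype _ (fun m => by simp [Finset.mem_compl]) _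

lemma unfold_modeAll_single (P : ∀ n, Matrix (Fin (I n)) (Fin (I n)) ℝ) (n : Fin N)
    (X : (∀ k, Fin (I k)) → ℝ) :
    modeUnfold (modeAll (Ps P {n}) X) n = P n * modeUnfold X n := by
  ext a j
  show modeAll (Ps P {n}) X (fullIdx n a j) = _
  rw [Matrix.mul_apply]
  simp only [modeAll]
  rw [← Equiv.sum_comp (idxEquiv (I := I) n).symm
    (fun i' => (∏ m, Ps P {n} m (fullIdx n a j m) (i' m)) * X i')]
  rw [Fintype.sum_prod_type]
  have hterm : ∀ (b : Fin (I n)) (j' : ∀ m : {m : Fin N // m ≠ n}, Fin (I m.1)),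
      (∏ m, Ps P {n} m (fullIdx n a j m) ((fullIdx n b j') m)) * X (fullIdx n b j')
      = (if j = j' then 1 else 0) * (P n a b * X (fullIdx n b j')) := by
    intro b j'
    have hp : (∏ m, Ps P {n} m (fullIdx n a j m) ((fullIdx n b j') m))
        = P n a b * (if j = j' then 1 else 0) := by
      rw [prod_split n]
      congr 1
      · rw [fullIdx_same, fullIdx_same]
        simp [Ps]
      · rw [show (∏ m : {m : Fin N // m ≠ n},
            Ps P {n} m.1 (fullIdx n a j m.1) ((fullIdx n b j') m.1))
            = ∏ m : {m : Fin N // m ≠ n},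
              (1 : Matrix (Fin (I m.1)) (Fin (I m.1)) ℝ) (j m) (j' m) from
          Finset.prod_congr rfl fun m _ => by
            rw [fullIdx_ne n a j m.1 m.2, fullIdx_ne n b j' m.1 m.2]
            simp [Ps, m.2]]
        exact prod_one_family j j'
    rw [hp]
    ring
  rw [Finset.sum_congr rfl fun b _ => Finset.sum_congr rfl fun j' _ => by
    show ((fun i' => (∏ m, Ps P {n} m (fullIdx n a j m) (i' m)) * X i')
      ((idxEquiv (I := I) n).symm (b, j'))) = _
    exact hterm b j']
  rw [Finset.sum_comm]
  calc ∑ j', ∑ b, (if j = j' then (1:ℝ) else 0) * (P n a b * X (fullIdx n b j'))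
      = ∑ j', (if j = j' then ∑ b, P n a b * X (fullIdx n b j') else 0) := by
        refine Finset.sum_congr rfl fun j' _ => ?_
        split_ifs with h <;> simp
    _ = ∑ b, P n a b * X (fullIdx n b j) := by
        rw [Finset.sum_ite_eq _ j (fun j' => ∑ b, P n a b * X (fullIdx n b j'))]
        simp
    _ = ∑ b, P n a b * modeUnfold X n b j := rfl

end TuckerAux
end FPart
section GPart
open Matrix Finset
namespace TuckerAux
variable {N : ℕ} {I : Fin N → ℕ}

lemma tucker_eq_modeAll {R : Fin N → ℕ} (A : ∀ n, Matrix (Fin (I n)) (Fin (R n)) ℝ)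
    (X : (∀ k, Fin (I k)) → ℝ) :
    tucker (fun jj => ∑ i, X i * ∏ n, A n (i n) (jj n)) A
      = modeAll (fun n => A n * (A n)ᵀ) X := by
  funext i
  simp only [tucker, modeAll]
  calc ∑ jj : ∀ k, Fin (R k), (∑ i', X i' * ∏ n, A n (i' n) (jj n)) * ∏ n, A n (i n) (jj n)
      = ∑ jj : ∀ k, Fin (R k), ∑ i',
          X i' * ∏ n, A n (i n) (jj n) * A n (i' n) (jj n) := by
        refine Finset.sum_congr rfl fun jj _ => ?_
        rw [Finset.sum_mul]
        refine Finset.sum_congr rfl fun i' _ => ?_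
        rw [Finset.prod_mul_distrib]
        ring
    _ = ∑ i', X i' * ∑ jj : ∀ k, Fin (R k), ∏ n, A n (i n) (jj n) * A n (i' n) (jj n) := by
        rw [Finset.sum_comm]
        exact Finset.sum_congr rfl fun i' _ => (Finset.mul_sum _ _ _).symm
    _ = ∑ i', (∏ n, (A n * (A n)ᵀ) (i n) (i' n)) * X i' := by
        refine Finset.sum_congr rfl fun i' _ => ?_
        rw [mul_comm]
        congr 1
        have h := Finset.prod_univ_sum (fun n : Fin N => (Finset.univ : Finset (Fin (R n))))
          (fun n t => A n (i n) t * A n (i' n) t)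
        rw [Fintype.piFinset_univ] at h
        rw [← h]
        refine Finset.prod_congr rfl fun n _ => ?_
        rw [Matrix.mul_apply]
        rfl

lemma unfold_tucker {R : Fin N → ℕ} (G : (∀ k, Fin (R k)) → ℝ)
    (A : ∀ n, Matrix (Fin (I n)) (Fin (R n)) ℝ) (n : Fin N) :
    ∃ C : Matrix (Fin (R n)) (∀ m : {m : Fin N // m ≠ n}, Fin (I m.1)) ℝ,
      modeUnfold (tucker G A) n = A n * C := by
  classical
  refine ⟨Matrix.of fun t j => ∑ jj : ∀ k, Fin (R k),
    if jj n = t then G jj * ∏ m : {m : Fin N // m ≠ n}, A m.1 (j m) (jj m.1) else 0, ?_⟩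
  ext a j
  rw [Matrix.mul_apply]
  calc modeUnfold (tucker G A) n a j
      = ∑ jj : ∀ k, Fin (R k), G jj * ∏ m, A m ((fullIdx n a j) m) (jj m) := rfl
    _ = ∑ jj : ∀ k, Fin (R k), G jj *
          (A n a (jj n) * ∏ m : {m : Fin N // m ≠ n}, A m.1 (j m) (jj m.1)) := by
        refine Finset.sum_congr rfl fun jj _ => ?_
        congr 1
        rw [prod_split n (fun m => A m ((fullIdx n a j) m) (jj m))]
        rw [fullIdx_same]
        congr 1
        exact Finset.prod_congr rfl fun m _ => by rw [fullIdx_ne n a j m.1 m.2]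
    _ = ∑ t : Fin (R n), ∑ jj : ∀ k, Fin (R k),
          A n a t * (if jj n = t then G jj * ∏ m : {m : Fin N // m ≠ n}, A m.1 (j m) (jj m.1)
            else 0) := by
        rw [Finset.sum_comm]
        refine Finset.sum_congr rfl fun jj _ => ?_
        rw [Finset.sum_eq_single_of_mem (jj n) (Finset.mem_univ _)
          (fun t _ ht => by rw [if_neg (fun hc => ht hc.symm), mul_zero])]
        rw [if_pos rfl]
        ring
    _ = ∑ t : Fin (R n), A n a t * ∑ jj : ∀ k, Fin (R k),
          (if jj n = t then G jj * ∏ m : {m : Fin N // m ≠ n}, A m.1 (j m) (jj m.1) else 0) := by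
        exact Finset.sum_congr rfl fun t _ => (Finset.mul_sum _ _ _).symm

lemma tuckerLoss_bddBelow (X : (∀ k, Fin (I k)) → ℝ) (R : Fin N → ℕ) :
    BddBelow {v : ℝ | ∃ (G : (∀ k, Fin (R k)) → ℝ)
      (A : ∀ n, Matrix (Fin (I n)) (Fin (R n)) ℝ),
      v = frobSq (fun i => X i - tucker G A i)} := by
  refine ⟨0, ?_⟩
  rintro v ⟨G, A, rfl⟩
  exact frobSq_nonneg _

lemma tuckerLoss_set_nonempty (X : (∀ k, Fin (I k)) → ℝ) (R : Fin N → ℕ) :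
    {v : ℝ | ∃ (G : (∀ k, Fin (R k)) → ℝ)
      (A : ∀ n, Matrix (Fin (I n)) (Fin (R n)) ℝ),
      v = frobSq (fun i => X i - tucker G A i)}.Nonempty :=
  ⟨_, 0, fun _ => 0, rfl⟩

lemma tuckerLoss_le (X : (∀ k, Fin (I k)) → ℝ) (R : Fin N → ℕ)
    (G : (∀ k, Fin (R k)) → ℝ) (A : ∀ n, Matrix (Fin (I n)) (Fin (R n)) ℝ) :
    tuckerLoss I X R ≤ frobSq (fun i => X i - tucker G A i) :=
  csInf_le (tuckerLoss_bddBelow X R) ⟨G, A, rfl⟩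

lemma le_tuckerLoss (X : (∀ k, Fin (I k)) → ℝ) (R : Fin N → ℕ) (b : ℝ)
    (h : ∀ (G : (∀ k, Fin (R k)) → ℝ) (A : ∀ n, Matrix (Fin (I n)) (Fin (R n)) ℝ),
      b ≤ frobSq (fun i => X i - tucker G A i)) :
    b ≤ tuckerLoss I X R := by
  refine le_csInf (tuckerLoss_set_nonempty X R) ?_
  rintro v ⟨G, A, rfl⟩
  exact h G A

lemma tuckerLoss_nonneg (X : (∀ k, Fin (I k)) → ℝ) (R : Fin N → ℕ) :
    0 ≤ tuckerLoss I X R :=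
  le_tuckerLoss X R 0 fun _ _ => frobSq_nonneg _

end TuckerAux
end GPart
section HPart
open Matrix Finset
namespace TuckerAux
variable {N : ℕ} {I : Fin N → ℕ}

lemma modeUnfold_sub (X Y : (∀ k, Fin (I k)) → ℝ) (n : Fin N) :
    modeUnfold (fun i => X i - Y i) n = modeUnfold X n - modeUnfold Y n := by
  ext a j
  simp [modeUnfold, Matrix.sub_apply]

lemma surrLoss_nonneg (σ : ∀ n, Fin (I n) → ℝ) (R : Fin N → ℕ) : 0 ≤ surrLoss σ R :=
  Finset.sum_nonneg fun _ _ => Finset.sum_nonneg fun _ _ => sq_nonneg _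

lemma packObj_nonneg (σ : ∀ n, Fin (I n) → ℝ) (R : Fin N → ℕ) : 0 ≤ packObj σ R :=
  Finset.sum_nonneg fun _ _ => Finset.sum_nonneg fun _ _ => sq_nonneg _

lemma frob_eq_sum_sq (X : (∀ k, Fin (I k)) → ℝ) (σ : ∀ n, Fin (I n) → ℝ)
    (hσ : ∀ n, IsSingularValues (modeUnfold X n) (σ n)) (n : Fin N) :
    frobSq X = ∑ i, σ n i ^ 2 := by
  obtain ⟨h0, ha, e, he⟩ := hσ n
  have he' : ∀ i, σ n i ^ 2 = lam (modeUnfold X n) (e i) := he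
  rw [frobSq_eq_frobM X n, frobM_eq_trace, trace_S]
  rw [← Equiv.sum_comp e (lam (modeUnfold X n))]
  exact Finset.sum_congr rfl fun i _ => (he' i).symm

lemma pack_add_surr (X : (∀ k, Fin (I k)) → ℝ) (σ : ∀ n, Fin (I n) → ℝ)
    (hσ : ∀ n, IsSingularValues (modeUnfold X n) (σ n)) (R : Fin N → ℕ) :
    packObj σ R + surrLoss σ R = N * frobSq X := by
  unfold packObj surrLoss
  rw [← Finset.sum_add_distrib]
  calc ∑ n, ((∑ i ∈ Finset.univ.filter (fun i : Fin (I n) => (i : ℕ) < R n), σ n i ^ 2)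
        + ∑ i ∈ Finset.univ.filter (fun i : Fin (I n) => R n ≤ (i : ℕ)), σ n i ^ 2)
      = ∑ n : Fin N, frobSq X := by
        refine Finset.sum_congr rfl fun n _ => ?_
        rw [← sum_split (R := R n) (fun i => σ n i ^ 2)]
        exact (frob_eq_sum_sq X σ hσ n).symm
    _ = N * frobSq X := by
        rw [Finset.sum_const, Finset.card_univ, Fintype.card_fin, nsmul_eq_mul]

/-- Upper bound: the optimal Tucker loss is at most the surrogate loss (HOSVD). -/
lemma loss_le_surr (X : (∀ k, Fin (I k)) → ℝ) (σ : ∀ n, Fin (I n) → ℝ)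
    (hσ : ∀ n, IsSingularValues (modeUnfold X n) (σ n)) (R : Fin N → ℕ)
    (hR : ∀ n, R n ≤ I n) :
    tuckerLoss I X R ≤ surrLoss σ R := by
  have hex := fun n => exists_cols (modeUnfold X n) (σ n) (hσ n) (R n) (hR n)
  choose A hAtA hbound using hex
  set P : ∀ n, Matrix (Fin (I n)) (Fin (I n)) ℝ := fun n => A n * (A n)ᵀ with hP
  have hsym : ∀ n, (P n)ᵀ = P n := fun n => by
    rw [hP]; simp only; rw [Matrix.transpose_mul, Matrix.transpose_transpose]
  have hidem : ∀ n, P n * P n = P n := fun n => by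
    rw [hP]; simp only
    rw [Matrix.mul_assoc (A n) (A n)ᵀ, ← Matrix.mul_assoc (A n)ᵀ, hAtA, Matrix.one_mul]
  calc tuckerLoss I X R
      ≤ frobSq (fun i => X i - tucker (fun jj => ∑ i, X i * ∏ n, A n (i n) (jj n)) A i) :=
        tuckerLoss_le X R _ A
    _ = frobSq (fun i => X i - modeAll P X i) := by rw [tucker_eq_modeAll]
    _ ≤ ∑ n, frobSq (fun i => X i - modeAll (Ps P {n}) X i) := hosvd_sum_bound P hsym hidem X
    _ ≤ surrLoss σ R := by
        unfold surrLoss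
        refine Finset.sum_le_sum fun n _ => ?_
        rw [frobSq_eq_frobM _ n, modeUnfold_sub, unfold_modeAll_single]
        exact hbound n

/-- Lower bound: the surrogate loss is at most `N` times the Tucker loss. -/
lemma surr_le_N_mul (X : (∀ k, Fin (I k)) → ℝ) (σ : ∀ n, Fin (I n) → ℝ)
    (hσ : ∀ n, IsSingularValues (modeUnfold X n) (σ n)) (R : Fin N → ℕ)
    (hN : 1 ≤ N) :
    surrLoss σ R ≤ N * tuckerLoss I X R := by
  have hN' : (0 : ℝ) < N := by exact_mod_cast hN
  have key : ∀ (G : (∀ k, Fin (R k)) → ℝ) (A : ∀ n, Matrix (Fin (I n)) (Fin (R n)) ℝ),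
      surrLoss σ R ≤ N * frobSq (fun i => X i - tucker G A i) := by
    intro G A
    have hterm : ∀ n, ∑ i ∈ Finset.univ.filter (fun i : Fin (I n) => R n ≤ (i : ℕ)), σ n i ^ 2
        ≤ frobSq (fun i => X i - tucker G A i) := by
      intro n
      obtain ⟨C, hC⟩ := unfold_tucker G A n
      obtain ⟨P, hPsym, hPidem, hPtr, hPAC⟩ := exists_proj_of_factor (A n)
      have h := tail_le_frobM_sub (modeUnfold X n) (σ n) (hσ n) (R n)
        (modeUnfold (tucker G A) n) P hPsym hPidem (by rw [hC]; exact hPAC C) hPtr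
      rw [frobSq_eq_frobM _ n, modeUnfold_sub]
      exact h
    calc surrLoss σ R ≤ ∑ _n : Fin N, frobSq (fun i => X i - tucker G A i) :=
          Finset.sum_le_sum fun n _ => hterm n
      _ = N * frobSq (fun i => X i - tucker G A i) := by
          rw [Finset.sum_const, Finset.card_univ, Fintype.card_fin, nsmul_eq_mul]
  have : surrLoss σ R / N ≤ tuckerLoss I X R := by
    refine le_tuckerLoss X R _ fun G A => ?_
    rw [div_le_iff₀ hN']
    rw [mul_comm]
    exact key G A
  calc surrLoss σ R = N * (surrLoss σ R / N) := by field_simp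
    _ ≤ N * tuckerLoss I X R := by
        exact mul_le_mul_of_nonneg_left this (le_of_lt hN')

end TuckerAux
end HPart
open TuckerAux in
/-- **RRE guarantee for approximate Tucker packing**: if `r ∈ F` is a
`(1 − ε/N)`-approximation to the Tucker packing problem with coefficients
`(σ_i⁽ⁿ⁾)²`, then `RRE(X,r) ≤ N·RRE(X,r*) + ε`, where `r*` minimizes the Tucker
loss over `F` and `RRE(X,r) = L(X,r)/‖X‖_F²`. -/
theorem rre_of_approximate_packing {N : ℕ} {I : Fin N → ℕ} (hI : ∀ n, 1 ≤ I n)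
    (X : (∀ k, Fin (I k)) → ℝ) (hX : X ≠ 0)
    (σ : ∀ n, Fin (I n) → ℝ) (hσ : ∀ n, IsSingularValues (modeUnfold X n) (σ n))
    (c : ℕ) (hc : 1 + ∑ n, I n ≤ c)
    (F : Set (Fin N → ℕ))
    (hF : F = {R | (∀ n, 1 ≤ R n ∧ R n ≤ I n) ∧
      (∏ n, R n) + ∑ n, I n * R n ≤ c})
    (rstar : Fin N → ℕ) (hrstar : rstar ∈ F)
    (hrstarmin : ∀ R ∈ F, tuckerLoss I X rstar ≤ tuckerLoss I X R)
    (ε : ℝ) (hε0 : 0 ≤ ε) (hεN : ε ≤ N)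
    (r : Fin N → ℕ) (hr : r ∈ F)
    (happrox : ∀ R ∈ F, (1 - ε / N) * packObj σ R ≤ packObj σ r) :
    tuckerLoss I X r / frobSq X ≤ N * (tuckerLoss I X rstar / frobSq X) + ε := by

  classical
  subst hF
  obtain ⟨hrb, -⟩ := hr
  obtain ⟨hrsb, hrsc⟩ := hrstar
  -- positivity of ‖X‖²
  have hW : 0 < frobSq X := by
    obtain ⟨i0, hi0⟩ := Function.ne_iff.mp hX
    have hi0' : X i0 ≠ 0 := by simpa using hi0
    have h1 : X i0 ^ 2 ≤ frobSq X :=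
      Finset.single_le_sum (f := fun i => X i ^ 2) (fun i _ => sq_nonneg _)
        (Finset.mem_univ i0)
    have h2 : 0 < X i0 ^ 2 := by
      rcases lt_or_gt_of_ne hi0' with h | h
      · nlinarith
      · nlinarith
    linarith
  rcases Nat.eq_zero_or_pos N with hN0 | hN1
  · -- degenerate case N = 0
    subst hN0
    have hε : ε = 0 := le_antisymm (by exact_mod_cast hεN) hε0
    have hL0 : tuckerLoss I X r = 0 := by
      refine le_antisymm ?_ (tuckerLoss_nonneg X r)
      have hz : (fun i => X i - tucker (R := r) (fun _ => X fun k => k.elim0)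
          (fun n => n.elim0) i) = fun _ => (0 : ℝ) := by
        funext i
        have hi : i = fun k => k.elim0 := funext fun k => k.elim0
        have ht : tucker (R := r) (fun _ => X fun k => k.elim0)
            (fun n : Fin 0 => n.elim0) i = X fun k => k.elim0 := by
          simp [tucker]
        rw [ht, hi]
        ring
      have := tuckerLoss_le X r (fun _ => X fun k => k.elim0) (fun n => n.elim0)
      rw [hz] at this
      simpa [frobSq] using this
    rw [hL0, hε]
    simp
  · -- main case N ≥ 1
    have hN' : (0 : ℝ) < N := by exact_mod_cast hN1
    set W := frobSq X with hWdef
    set Lr := tuckerLoss I X r with hLr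
    set Ls := tuckerLoss I X rstar with hLs
    have h1 : Lr ≤ surrLoss σ r := loss_le_surr X σ hσ r (fun n => (hrb n).2)
    have h2 : surrLoss σ r = N * W - packObj σ r := by
      have := pack_add_surr X σ hσ r
      linarith
    have h3 : (1 - ε / N) * packObj σ rstar ≤ packObj σ r :=
      happrox rstar ⟨hrsb, hrsc⟩
    have h4 : packObj σ rstar ≤ N * W := by
      have := pack_add_surr X σ hσ rstar
      have := surrLoss_nonneg σ rstar
      linarith
    have h5 : surrLoss σ rstar ≤ N * Ls := surr_le_N_mul X σ hσ rstar hN1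
    have h6 : surrLoss σ rstar = N * W - packObj σ rstar := by
      have := pack_add_surr X σ hσ rstar
      linarith
    have hεN' : 0 ≤ ε / N := div_nonneg hε0 (le_of_lt hN')
    have hchain : Lr ≤ N * Ls + ε * W := by
      have e1 : Lr ≤ N * W - packObj σ r := by linarith
      have e2 : N * W - packObj σ r ≤ N * W - (1 - ε / N) * packObj σ rstar := by linarith
      have e3 : N * W - (1 - ε / N) * packObj σ rstar
          = (N * W - packObj σ rstar) + (ε / N) * packObj σ rstar := by ring
      have e4 : (ε / N) * packObj σ rstar ≤ (ε / N) * (N * W) :=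
        mul_le_mul_of_nonneg_left h4 hεN'
      have hNne : (N : ℝ) ≠ 0 := ne_of_gt hN'
      have e5 : (ε / N) * (N * W) = ε * W := by
        field_simp
      linarith
    have hgoal : N * (Ls / W) + ε = (N * Ls + ε * W) / W := by
      field_simp
    rw [hgoal, div_le_div_iff_of_pos_right hW]
    exact hchain
end

section
/- Let X ≠ 0 be an order-N real tensor of shape (I_1,…,I_N), let c ≥ 1 + Σ_{n=1}^N I_n, let F = {r ∈ [I_1]×⋯×[I_N] : ∏_{n=1}^N R_n + Σ_{n=1}^N I_n R_n ≤ c}, and let r̃* ∈ F minimize the surrogate loss L̃(X,·) over F. Let 0 ≤ ε' ≤ 1. If r ∈ F satisfies Σ_{n=1}^N Σ_{i=1}^{R_n} (σ_i^(n))² ≥ (1 − ε') · Σ_{n=1}^N Σ_{i=1}^{R̃*_n} (σ_i^(n))², then L̃(X,r) ≤ L̃(X,r̃*) + ε' · (N‖X‖_F² − L̃(X,r̃*)) ≤ L̃(X,r̃*) + ε' · N · ‖X‖_F². -/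
open scoped BigOperators
open Matrix

lemma trace_eq_sum_eig {k : ℕ} (A : Matrix (Fin k) (Fin k) ℝ) (hA : A.IsHermitian) :
    A.trace = ∑ i, hA.eigenvalues i := by
  nth_rewrite 1 [hA.spectral_theorem]
  rw [Unitary.conjStarAlgAut_apply, Matrix.trace_mul_cycle]
  have h1 : (star (hA.eigenvectorUnitary : Matrix (Fin k) (Fin k) ℝ)) *
      (hA.eigenvectorUnitary : Matrix (Fin k) (Fin k) ℝ) = 1 :=
    (Matrix.mem_unitaryGroup_iff').mp hA.eigenvectorUnitary.2
  rw [h1, one_mul, Matrix.trace_diagonal]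
  simp

lemma sum_sq_unfold {N : ℕ} {I : Fin N → ℕ} (X : (∀ k, Fin (I k)) → ℝ) (n : Fin N) :
    ∑ i, ∑ j, (modeUnfold X n i j) ^ 2 = frobSq X := by
  have hp := Fintype.sum_prod_type
    (f := fun p : (Fin (I n)) × (∀ m : {m : Fin N // m ≠ n}, Fin (I m.1)) =>
      modeUnfold X n p.1 p.2 ^ 2)
  rw [frobSq, ← hp]
  refine Fintype.sum_equiv (Equiv.piSplitAt n (fun k => Fin (I k))).symm _ _ fun p => ?_
  have : fullIdx n p.1 p.2 = (Equiv.piSplitAt n fun k => Fin (I k)).symm p := by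
    funext k
    simp only [fullIdx, Equiv.piSplitAt_symm_apply]
    by_cases h : k = n
    · subst h; simp
    · simp [h]
  simp [modeUnfold, this]

lemma sum_sq_sv {N : ℕ} {I : Fin N → ℕ} (X : (∀ k, Fin (I k)) → ℝ)
    (σ : ∀ n, Fin (I n) → ℝ) (hσ : ∀ n, IsSingularValues (modeUnfold X n) (σ n))
    (n : Fin N) : ∑ i, σ n i ^ 2 = frobSq X := by
  obtain ⟨-, -, e, he⟩ := hσ n
  calc ∑ i, σ n i ^ 2
      = ∑ i, (Matrix.isHermitian_mul_conjTranspose_self (modeUnfold X n)).eigenvalues (e i) := by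
        simp [he]
    _ = ∑ i, (Matrix.isHermitian_mul_conjTranspose_self (modeUnfold X n)).eigenvalues i :=
        Equiv.sum_comp e _
    _ = (modeUnfold X n * (modeUnfold X n)ᴴ).trace :=
        (trace_eq_sum_eig _ _).symm
    _ = ∑ i, ∑ j, (modeUnfold X n i j) ^ 2 := by
        simp [Matrix.trace, Matrix.mul_apply, Matrix.conjTranspose_apply, sq]
    _ = frobSq X := sum_sq_unfold X n

lemma surr_add_pack {N : ℕ} {I : Fin N → ℕ} (X : (∀ k, Fin (I k)) → ℝ)
    (σ : ∀ n, Fin (I n) → ℝ) (hσ : ∀ n, IsSingularValues (modeUnfold X n) (σ n))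
    (R : Fin N → ℕ) : surrLoss σ R + packObj σ R = N * frobSq X := by
  rw [surrLoss, packObj, ← Finset.sum_add_distrib]
  have : ∀ n : Fin N,
      (∑ i ∈ Finset.univ.filter (fun i : Fin (I n) => R n ≤ (i : ℕ)), σ n i ^ 2) +
      (∑ i ∈ Finset.univ.filter (fun i : Fin (I n) => (i : ℕ) < R n), σ n i ^ 2) =
      frobSq X := by
    intro n
    rw [← sum_sq_sv X σ hσ n]
    have heq : (Finset.univ.filter fun i : Fin (I n) => R n ≤ (i : ℕ)) =
        Finset.univ.filter (fun i : Fin (I n) => ¬ (i : ℕ) < R n) := by simp [not_lt]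
    rw [heq, add_comm, Finset.sum_filter_add_sum_filter_not]
  simp only [this, Finset.sum_const, Finset.card_univ, Fintype.card_fin, nsmul_eq_mul]

/-- **Surrogate-loss guarantee for approximate packing**: if `r ∈ F` is a
`(1 − ε')`-approximation (relative to the surrogate minimizer `r̃*`) of the packing
objective, then
`L̃(X,r) ≤ L̃(X,r̃*) + ε'(N‖X‖_F² − L̃(X,r̃*)) ≤ L̃(X,r̃*) + ε'·N·‖X‖_F²`. -/
theorem surrogate_of_approximate_packing {N : ℕ} {I : Fin N → ℕ} (hI : ∀ n, 1 ≤ I n)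
    (X : (∀ k, Fin (I k)) → ℝ) (hX : X ≠ 0)
    (σ : ∀ n, Fin (I n) → ℝ) (hσ : ∀ n, IsSingularValues (modeUnfold X n) (σ n))
    (c : ℕ) (hc : 1 + ∑ n, I n ≤ c)
    (F : Set (Fin N → ℕ))
    (hF : F = {R | (∀ n, 1 ≤ R n ∧ R n ≤ I n) ∧
      (∏ n, R n) + ∑ n, I n * R n ≤ c})
    (rt : Fin N → ℕ) (hrt : rt ∈ F)
    (hrtmin : ∀ R ∈ F, surrLoss σ rt ≤ surrLoss σ R)
    (ε' : ℝ) (hε0 : 0 ≤ ε') (hε1 : ε' ≤ 1)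
    (r : Fin N → ℕ) (hr : r ∈ F)
    (happrox : (1 - ε') * packObj σ rt ≤ packObj σ r) :
    surrLoss σ r ≤ surrLoss σ rt + ε' * (N * frobSq X - surrLoss σ rt) ∧
      surrLoss σ rt + ε' * (N * frobSq X - surrLoss σ rt) ≤
        surrLoss σ rt + ε' * N * frobSq X := by
  have h_r := surr_add_pack X σ hσ r
  have h_rt := surr_add_pack X σ hσ rt
  have h_nonneg : 0 ≤ surrLoss σ rt := by
    apply Finset.sum_nonneg
    intro n _
    exact Finset.sum_nonneg fun i _ => sq_nonneg _
  constructor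
  · nlinarith [happrox]
  · nlinarith [mul_nonneg hε0 h_nonneg]
end

section
/- Let 0 < ε ≤ 1, let (I_1,…,I_N) ∈ ℤ_{≥1}^N, let a^(n) ∈ ℝ_{≥0}^{I_n} be nonincreasing sequences for n = 1,…,N, and let F ⊆ [I_1]×⋯×[I_N] be nonempty and downward closed. For each n, let S_n^(ε) = {⌈(1+ε)^k⌉ : k ∈ ℤ_{≥0}, ⌈(1+ε)^k⌉ ≤ I_n}. Let r* maximize f(r) = Σ_{n=1}^N Σ_{i=1}^{R_n} a_i^(n) over F, and let r^(ε) maximize f over the nonempty set (S_1^(ε) × ⋯ × S_N^(ε)) ∩ F. Then f(r^(ε)) ≥ (1+ε)^{−1} · f(r*). -/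
open scoped BigOperators

/-- Tucker packing objective `f(R) = Σ_{n=1}^N Σ_{i=1}^{R_n} a_i⁽ⁿ⁾`
(sequences are indexed starting at `1`). -/
noncomputable def fObj {N : ℕ} (a : Fin N → ℕ → ℝ) (R : Fin N → ℕ) : ℝ :=
  ∑ n, ∑ i ∈ Finset.Icc 1 (R n), a n i

lemma coord_bound (ε : ℝ) (hε0 : 0 < ε) (a : ℕ → ℝ) (In m R : ℕ)
    (hm1 : 1 ≤ m) (hmR : m ≤ R) (hRI : R ≤ In)
    (ha0 : ∀ i, 1 ≤ i → i ≤ In → 0 ≤ a i)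
    (hmono : ∀ i j, 1 ≤ i → i ≤ j → j ≤ In → a j ≤ a i)
    (hR : (R : ℝ) < (1 + ε) * m) :
    ∑ i ∈ Finset.Icc 1 R, a i ≤ (1 + ε) * ∑ i ∈ Finset.Icc 1 m, a i := by
  have hIcc : ∀ n : ℕ, Finset.Icc 1 n = Finset.Ioc 0 n := by
    intro n; rw [← Finset.Icc_add_one_left_eq_Ioc]; rfl
  have hsplit : (∑ i ∈ Finset.Ioc 0 m, a i) + ∑ i ∈ Finset.Ioc m R, a i
      = ∑ i ∈ Finset.Ioc 0 R, a i :=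
    Finset.sum_Ioc_consecutive _ (Nat.zero_le m) hmR
  have htail : ∑ i ∈ Finset.Ioc m R, a i ≤ ((R - m : ℕ) : ℝ) * a m := by
    have := Finset.sum_le_card_nsmul (Finset.Ioc m R) a (a m) (by
      intro i hi
      rw [Finset.mem_Ioc] at hi
      exact hmono m i hm1 hi.1.le (hi.2.trans hRI))
    rwa [Nat.card_Ioc, nsmul_eq_mul] at this
  have ham : 0 ≤ a m := ha0 m hm1 (hmR.trans hRI)
  have hcast : ((R - m : ℕ) : ℝ) = (R : ℝ) - m := by
    push_cast [Nat.cast_sub hmR]; ring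
  have htail2 : ((R - m : ℕ) : ℝ) * a m ≤ ε * ((m : ℝ) * a m) := by
    rw [hcast]
    have : (R : ℝ) - m ≤ ε * m := by nlinarith
    nlinarith
  have hhead : (m : ℝ) * a m ≤ ∑ i ∈ Finset.Ioc 0 m, a i := by
    have := Finset.card_nsmul_le_sum (Finset.Ioc 0 m) a (a m) (by
      intro i hi
      rw [Finset.mem_Ioc] at hi
      exact hmono i m hi.1 hi.2 (hmR.trans hRI))
    rwa [Nat.card_Ioc, nsmul_eq_mul, Nat.sub_zero] at this
  rw [hIcc R, hIcc m, ← hsplit]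
  nlinarith

/-- **Grid search guarantee**: restricting the search to the geometric grid
`S_n^(ε) = {⌈(1+ε)^k⌉ : k ∈ ℤ_{≥0}, ⌈(1+ε)^k⌉ ≤ I_n}` inside a downward closed
feasible set `F` loses at most a factor `(1+ε)` in the packing objective. -/
theorem grid_search {N : ℕ} (ε : ℝ) (hε0 : 0 < ε) (hε1 : ε ≤ 1)
    (I : Fin N → ℕ) (hI : ∀ n, 1 ≤ I n)
    (a : Fin N → ℕ → ℝ)
    (ha0 : ∀ n i, 1 ≤ i → i ≤ I n → 0 ≤ a n i)
    (hamono : ∀ n i j, 1 ≤ i → i ≤ j → j ≤ I n → a n j ≤ a n i)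
    (F : Set (Fin N → ℕ)) (hFne : F.Nonempty)
    (hFshape : ∀ R ∈ F, ∀ n, 1 ≤ R n ∧ R n ≤ I n)
    (hFdc : ∀ R ∈ F, ∀ R' : Fin N → ℕ,
      (∀ n, 1 ≤ R' n) → (∀ n, R' n ≤ R n) → R' ∈ F)
    (rstar : Fin N → ℕ) (hrstar : rstar ∈ F)
    (hrstarmax : ∀ R ∈ F, fObj a R ≤ fObj a rstar)
    (rgrid : Fin N → ℕ) (hrgrid : rgrid ∈ F)
    (hgrid : ∀ n, ∃ k : ℕ, rgrid n = ⌈((1 + ε) ^ k : ℝ)⌉₊)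
    (hrgridmax : ∀ R ∈ F, (∀ n, ∃ k : ℕ, R n = ⌈((1 + ε) ^ k : ℝ)⌉₊) →
      fObj a R ≤ fObj a rgrid) :
    (1 + ε)⁻¹ * fObj a rstar ≤ fObj a rgrid := by
  classical
  have h1ε : (0 : ℝ) < 1 + ε := by linarith
  -- bound on valid exponents
  set P : Fin N → ℕ → Prop := fun n k => ⌈((1 + ε) ^ k : ℝ)⌉₊ ≤ rstar n with hP
  set B : Fin N → ℕ := fun n => ⌈((rstar n : ℝ)) / ε⌉₊ with hB
  have hbound : ∀ n k, P n k → k ≤ B n := by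
    intro n k hk
    have h1 : (1 : ℝ) + k * ε ≤ (1 + ε) ^ k := one_add_mul_le_pow (by linarith) k
    have h2 : ((1 + ε) ^ k : ℝ) ≤ ⌈((1 + ε) ^ k : ℝ)⌉₊ := Nat.le_ceil _
    have h3 : (⌈((1 + ε) ^ k : ℝ)⌉₊ : ℝ) ≤ rstar n := by exact_mod_cast hk
    have hk' : (k : ℝ) ≤ (rstar n : ℝ) / ε := by
      rw [le_div_iff₀ hε0]; nlinarith
    have : (k : ℝ) ≤ (B n : ℝ) := hk'.trans (Nat.le_ceil _)
    exact_mod_cast this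
  have hP0 : ∀ n, P n 0 := by
    intro n
    simp only [hP, pow_zero, Nat.ceil_one]
    exact (hFshape rstar hrstar n).1
  set K : Fin N → ℕ := fun n => Nat.findGreatest (P n) (B n) with hK
  set R' : Fin N → ℕ := fun n => ⌈((1 + ε) ^ (K n) : ℝ)⌉₊ with hR'
  have hPK : ∀ n, P n (K n) := fun n =>
    Nat.findGreatest_spec (Nat.zero_le _) (hP0 n)
  have hnot : ∀ n, ¬ P n (K n + 1) := by
    intro n hcon
    have h1 : K n + 1 ≤ B n := hbound n _ hcon
    have h2 : K n + 1 ≤ K n := Nat.le_findGreatest h1 hcon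
    omega
  have hR'1 : ∀ n, 1 ≤ R' n := by
    intro n
    have : (0 : ℝ) < (1 + ε) ^ (K n) := pow_pos h1ε _
    exact Nat.one_le_iff_ne_zero.mpr (by positivity)
  have hR'le : ∀ n, R' n ≤ rstar n := fun n => hPK n
  have hR'F : R' ∈ F := hFdc rstar hrstar R' hR'1 hR'le
  have hR'grid : ∀ n, ∃ k : ℕ, R' n = ⌈((1 + ε) ^ k : ℝ)⌉₊ := fun n => ⟨K n, rfl⟩
  have hclose : ∀ n, (rstar n : ℝ) < (1 + ε) * R' n := by
    intro n
    have h1 : rstar n < ⌈((1 + ε) ^ (K n + 1) : ℝ)⌉₊ := by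
      have := hnot n; simp only [hP, not_le] at this; exact this
    have h2 : (⌈((1 + ε) ^ (K n + 1) : ℝ)⌉₊ : ℝ) < (1 + ε) ^ (K n + 1) + 1 :=
      Nat.ceil_lt_add_one (by positivity)
    have h3 : ((rstar n : ℝ)) + 1 ≤ (⌈((1 + ε) ^ (K n + 1) : ℝ)⌉₊ : ℝ) := by
      exact_mod_cast h1
    have h4 : ((1 + ε) ^ (K n + 1) : ℝ) ≤ (1 + ε) * R' n := by
      rw [pow_succ, mul_comm ((1+ε)^(K n)) (1+ε)]
      exact mul_le_mul_of_nonneg_left (Nat.le_ceil _) h1ε.le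
    linarith
  -- coordinatewise bound
  have hmain : fObj a rstar ≤ (1 + ε) * fObj a R' := by
    unfold fObj
    rw [Finset.mul_sum]
    apply Finset.sum_le_sum
    intro n _
    exact coord_bound ε hε0 (a n) (I n) (R' n) (rstar n) (hR'1 n) (hR'le n)
      (hFshape rstar hrstar n).2 (ha0 n) (hamono n) (hclose n)
  have hgridle : fObj a R' ≤ fObj a rgrid := hrgridmax R' hR'F hR'grid
  rw [inv_mul_le_iff₀ h1ε]
  calc fObj a rstar ≤ (1 + ε) * fObj a R' := hmain
    _ ≤ (1 + ε) * fObj a rgrid := mul_le_mul_of_nonneg_left hgridle h1ε.le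
end

section
/- Consider a Tucker packing instance with shape (I_1,…,I_N) ∈ ℤ_{≥1}^N, nonincreasing sequences a^(n) ∈ ℝ_{≥0}^{I_n}, and budget c ≥ 1, and let 0 < ε < 1/3. Suppose r* = (R*_1,…,R*_N) ∈ [I_1]×⋯×[I_N] is feasible (∏_{n=1}^N R*_n + Σ_{n=1}^N I_n R*_n ≤ c) and there is an index m ∈ [N] with R*_m ≥ ⌈1/ε⌉. Let k* be the largest nonnegative integer with (1+ε)^{k*} ≤ ∏_{n=1}^N R*_n, and define r̂ by R̂_n = R*_n for n ≠ m and R̂_m = ⌊R*_m/(1+ε)⌋. Then r̂ ∈ [I_1]×⋯×[I_N], ∏_{n=1}^N R̂_n ≤ (1+ε)^{k*}, Σ_{n=1}^N I_n R̂_n ≤ c − (1+ε)^{k*}, and f(r̂) ≥ (1 − 2ε) · f(r*), where f(r) = Σ_{n=1}^N Σ_{i=1}^{R_n} a_i^(n). -/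
open scoped BigOperators

private lemma rounding_arith (ε Rr hr A Sl Sk Sf T : ℝ)
    (hε0 : 0 < ε) (hT0 : 0 ≤ T) (hSk0 : 0 ≤ Sk) (hSl0 : 0 ≤ Sl)
    (hR : 0 < Rr) (hh0 : 0 ≤ hr) (hhRr : hr ≤ Rr)
    (hkey : (1 - 2 * ε) * Rr ≤ hr)
    (hSl : Sl ≤ (Rr - hr) * A) (hSk : hr * A ≤ Sk)
    (hsplit : Sk + Sl = Sf) :
    (1 - 2 * ε) * (Sf + T) ≤ Sk + T := by
  subst hsplit
  have hRh : Rr - hr ≤ 2 * ε * Rr := by linarith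
  have p1 : hr * Sl ≤ hr * ((Rr - hr) * A) := mul_le_mul_of_nonneg_left hSl hh0
  have p2 : (Rr - hr) * (hr * A) ≤ (Rr - hr) * Sk :=
    mul_le_mul_of_nonneg_left hSk (by linarith)
  have p4 : (Rr - hr) * Sl ≤ 2 * ε * Rr * Sl := mul_le_mul_of_nonneg_right hRh hSl0
  have p5 : (Rr - hr) * Sk ≤ 2 * ε * Rr * Sk := mul_le_mul_of_nonneg_right hRh hSk0
  have hmain : Rr * Sl ≤ Rr * (2 * ε * (Sk + Sl)) := by nlinarith [p1, p2, p4, p5]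
  have hdiv : Sl ≤ 2 * ε * (Sk + Sl) := le_of_mul_le_mul_left hmain hR
  nlinarith [mul_nonneg hε0.le hT0]

/-- **Rounding a large feasible shape**: if a feasible shape `R*` has a large mode
`m` (with `R*_m ≥ ⌈1/ε⌉`) and `k*` is the largest exponent with
`(1+ε)^{k*} ≤ ∏_n R*_n`, then shrinking mode `m` to `⌊R*_m/(1+ε)⌋` yields a core
shape `R̂` that fits the budget split `((1+ε)^{k*}, c − (1+ε)^{k*})` and loses at
most a factor `(1 − 2ε)` in the objective. -/
theorem large_shape_rounding {N : ℕ} (I : Fin N → ℕ) (hI : ∀ n, 1 ≤ I n)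
    (a : Fin N → ℕ → ℝ)
    (ha0 : ∀ n i, 1 ≤ i → i ≤ I n → 0 ≤ a n i)
    (hamono : ∀ n i j, 1 ≤ i → i ≤ j → j ≤ I n → a n j ≤ a n i)
    (c : ℝ) (hc : 1 ≤ c)
    (ε : ℝ) (hε0 : 0 < ε) (hε3 : ε < 1 / 3)
    (Rstar : Fin N → ℕ) (hshape : ∀ n, 1 ≤ Rstar n ∧ Rstar n ≤ I n)
    (hfeas : ((∏ n, Rstar n : ℕ) : ℝ) + ((∑ n, I n * Rstar n : ℕ) : ℝ) ≤ c)
    (m : Fin N) (hm : ⌈1 / ε⌉₊ ≤ Rstar m)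
    (kstar : ℕ) (hk1 : (1 + ε) ^ kstar ≤ ((∏ n, Rstar n : ℕ) : ℝ))
    (hk2 : ∀ k : ℕ, (1 + ε) ^ k ≤ ((∏ n, Rstar n : ℕ) : ℝ) → k ≤ kstar)
    (Rhat : Fin N → ℕ)
    (hRhat : Rhat = Function.update Rstar m ⌊((Rstar m : ℝ)) / (1 + ε)⌋₊) :
    (∀ n, 1 ≤ Rhat n ∧ Rhat n ≤ I n) ∧
      ((∏ n, Rhat n : ℕ) : ℝ) ≤ (1 + ε) ^ kstar ∧
      ((∑ n, I n * Rhat n : ℕ) : ℝ) ≤ c - (1 + ε) ^ kstar ∧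
      (1 - 2 * ε) * fObj a Rstar ≤ fObj a Rhat := by
  subst hRhat
  have hε1 : (0:ℝ) < 1 + ε := by linarith
  set h : ℕ := ⌊((Rstar m : ℝ)) / (1 + ε)⌋₊ with hhdef
  have hRI : Rstar m ≤ I m := (hshape m).2
  have hεR : (1:ℝ) ≤ ε * (Rstar m : ℝ) := by
    have h1 : (1:ℝ)/ε ≤ (⌈1/ε⌉₊ : ℝ) := Nat.le_ceil _
    have h2 : ((⌈1/ε⌉₊ : ℕ) : ℝ) ≤ ((Rstar m : ℕ) : ℝ) := by exact_mod_cast hm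
    have h3 : (1:ℝ)/ε ≤ (Rstar m : ℝ) := h1.trans h2
    rw [div_le_iff₀ hε0] at h3
    linarith
  have hR3 : (3:ℝ) < (Rstar m : ℝ) := by nlinarith
  have hfl_le : (h : ℝ) ≤ (Rstar m : ℝ) / (1 + ε) := Nat.floor_le (by positivity)
  have hfl_gt : (Rstar m : ℝ) / (1 + ε) - 1 < (h : ℝ) := Nat.sub_one_lt_floor _
  have hkey : (1 - 2 * ε) * (Rstar m : ℝ) ≤ (h : ℝ) := by
    have h4 : (Rstar m : ℝ) - (1 + ε) < (h : ℝ) * (1 + ε) := by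
      have h5 := mul_lt_mul_of_pos_right hfl_gt hε1
      rw [sub_mul, div_mul_cancel₀ _ (ne_of_gt hε1)] at h5
      linarith
    rw [← mul_le_mul_iff_of_pos_right hε1]
    nlinarith [mul_le_mul_of_nonneg_right hεR (by linarith : (0:ℝ) ≤ 1 + 2*ε)]
  have hhR : h ≤ Rstar m := by
    have := hfl_le.trans (div_le_self (Nat.cast_nonneg _) (by linarith))
    exact_mod_cast this
  have hhRlt : h < Rstar m := by
    have : (h:ℝ) < (Rstar m : ℝ) :=
      lt_of_le_of_lt hfl_le (div_lt_self (by linarith) (by linarith))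
    exact_mod_cast this
  have hh1 : 1 ≤ h := by
    have : (1:ℝ) ≤ (h:ℝ) := by nlinarith
    exact_mod_cast this
  -- Part 1: shape
  have hshape' : ∀ n, 1 ≤ Function.update Rstar m h n ∧ Function.update Rstar m h n ≤ I n := by
    intro n
    rcases eq_or_ne n m with rfl | hne
    · rw [Function.update_self]
      exact ⟨hh1, hhR.trans hRI⟩
    · rw [Function.update_of_ne hne]
      exact hshape n
  refine ⟨hshape', ?_, ?_, ?_⟩
  -- Part 2: product bound
  · have hPm := Finset.prod_update_of_mem (Finset.mem_univ m) Rstar h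
    have hPs : ∏ n, Rstar n = Rstar m * ∏ n ∈ Finset.univ.erase m, Rstar n :=
      (Finset.mul_prod_erase Finset.univ Rstar (Finset.mem_univ m)).symm
    have hPup : ((∏ n, Rstar n : ℕ) : ℝ) < (1 + ε) ^ (kstar + 1) := by
      by_contra hcon
      push_neg at hcon
      exact absurd (hk2 _ hcon) (by omega)
    rw [Finset.sdiff_singleton_eq_erase] at hPm
    rw [hPm]
    rw [hPs] at hPup
    push_cast at hPup ⊢
    have hQ0 : (0:ℝ) ≤ ∏ n ∈ Finset.univ.erase m, (Rstar n : ℝ) :=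
      Finset.prod_nonneg fun n _ => Nat.cast_nonneg _
    calc (h:ℝ) * ∏ n ∈ Finset.univ.erase m, (Rstar n : ℝ)
        ≤ ((Rstar m : ℝ)/(1+ε)) * ∏ n ∈ Finset.univ.erase m, (Rstar n : ℝ) :=
          mul_le_mul_of_nonneg_right hfl_le hQ0
      _ = ((Rstar m : ℝ) * ∏ n ∈ Finset.univ.erase m, (Rstar n : ℝ))/(1+ε) := by ring
      _ ≤ (1+ε)^kstar := by
          rw [div_le_iff₀ hε1]
          rw [pow_succ] at hPup
          linarith
  -- Part 3: linear budget
  · have hle_pt : ∀ n, Function.update Rstar m h n ≤ Rstar n := by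
      intro n
      rcases eq_or_ne n m with rfl | hne
      · rw [Function.update_self]; exact hhR
      · rw [Function.update_of_ne hne]
    have hsum_le : (∑ n, I n * Function.update Rstar m h n) ≤ ∑ n, I n * Rstar n :=
      Finset.sum_le_sum fun n _ => Nat.mul_le_mul_left _ (hle_pt n)
    have h1 : ((∑ n, I n * Function.update Rstar m h n : ℕ):ℝ) ≤ ((∑ n, I n * Rstar n : ℕ):ℝ) :=
      Nat.cast_le.mpr hsum_le
    linarith
  -- Part 4: objective
  · have hhI : h + 1 ≤ I m := le_trans hhRlt hRI
    have hA0 : 0 ≤ a m (h+1) := ha0 m (h+1) (by omega) hhI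
    have hcard : (Finset.Icc (h+1) (Rstar m)).card = Rstar m - h := by
      rw [Nat.card_Icc]; omega
    have hSlost_le : ∑ i ∈ Finset.Icc (h+1) (Rstar m), a m i
        ≤ ((Rstar m : ℝ) - h) * a m (h+1) := by
      have hb := Finset.sum_le_card_nsmul (Finset.Icc (h+1) (Rstar m)) (fun i => a m i)
        (a m (h+1)) ?_
      · rw [hcard, nsmul_eq_mul] at hb
        have : ((Rstar m - h : ℕ) : ℝ) = (Rstar m : ℝ) - h := by
          push_cast [hhR]; ring
        rw [this] at hb
        exact hb
      · intro i hi
        rw [Finset.mem_Icc] at hi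
        exact hamono m (h+1) i (by omega) hi.1 (hi.2.trans hRI)
    have hSkept_ge : (h:ℝ) * a m (h+1) ≤ ∑ i ∈ Finset.Icc 1 h, a m i := by
      have hb := Finset.card_nsmul_le_sum (Finset.Icc 1 h) (fun i => a m i) (a m (h+1)) ?_
      · rw [Nat.card_Icc, nsmul_eq_mul] at hb
        have : ((h + 1 - 1 : ℕ) : ℝ) = (h:ℝ) := by push_cast; ring
        rw [this] at hb
        exact hb
      · intro i hi
        rw [Finset.mem_Icc] at hi
        exact hamono m i (h+1) hi.1 (by omega) hhI
    have hsplit : (∑ i ∈ Finset.Icc 1 h, a m i) + ∑ i ∈ Finset.Icc (h+1) (Rstar m), a m i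
        = ∑ i ∈ Finset.Icc 1 (Rstar m), a m i := by
      have e0 : Finset.Icc 1 h = Finset.Ioc 0 h := by rw [← Finset.Icc_add_one_left_eq_Ioc, zero_add]
      have e1 : Finset.Icc (h+1) (Rstar m) = Finset.Ioc h (Rstar m) := by
        rw [← Finset.Icc_add_one_left_eq_Ioc]
      have e2 : Finset.Icc 1 (Rstar m) = Finset.Ioc 0 (Rstar m) := by
        rw [← Finset.Icc_add_one_left_eq_Ioc, zero_add]
      rw [e0, e1, e2]
      exact Finset.sum_Ioc_consecutive _ (Nat.zero_le h) hhR
    have hSlost0 : 0 ≤ ∑ i ∈ Finset.Icc (h+1) (Rstar m), a m i :=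
      Finset.sum_nonneg fun i hi => by
        rw [Finset.mem_Icc] at hi
        exact ha0 m i (by omega) (hi.2.trans hRI)
    have hSkept0 : 0 ≤ ∑ i ∈ Finset.Icc 1 h, a m i :=
      Finset.sum_nonneg fun i hi => by
        rw [Finset.mem_Icc] at hi
        exact ha0 m i hi.1 ((hi.2.trans hhR).trans hRI)
    have hSfull0 : 0 ≤ ∑ i ∈ Finset.Icc 1 (Rstar m), a m i := by linarith
    have hT0 : 0 ≤ ∑ n ∈ Finset.univ.erase m, ∑ i ∈ Finset.Icc 1 (Rstar n), a n i :=
      Finset.sum_nonneg fun n _ => Finset.sum_nonneg fun i hi => by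
        rw [Finset.mem_Icc] at hi
        exact ha0 n i hi.1 (hi.2.trans (hshape n).2)
    have hf_star : fObj a Rstar = (∑ i ∈ Finset.Icc 1 (Rstar m), a m i)
        + ∑ n ∈ Finset.univ.erase m, ∑ i ∈ Finset.Icc 1 (Rstar n), a n i := by
      rw [fObj]
      exact (Finset.add_sum_erase _ _ (Finset.mem_univ m)).symm
    have hf_hat : fObj a (Function.update Rstar m h) = (∑ i ∈ Finset.Icc 1 h, a m i)
        + ∑ n ∈ Finset.univ.erase m, ∑ i ∈ Finset.Icc 1 (Rstar n), a n i := by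
      rw [fObj, ← Finset.add_sum_erase _ _ (Finset.mem_univ m)]
      congr 1
      · rw [Function.update_self]
      · exact Finset.sum_congr rfl fun n hn => by
          rw [Function.update_of_ne (Finset.ne_of_mem_erase hn)]
    rw [hf_star, hf_hat]
    exact rounding_arith ε (Rstar m) h (a m (h+1)) _ _ _ _ hε0 hT0 hSkept0 hSlost0
      (by linarith) (Nat.cast_nonneg h) (by exact_mod_cast hhR) hkey hSlost_le hSkept_ge hsplit
end

section
/- (Approximation guarantee of TuckerPackingSolver.) Consider a Tucker packing instance with shape (I_1,…,I_N) ∈ ℤ_{≥1}^N, nonincreasing sequences a^(n) ∈ ℝ_{≥0}^{I_n}, and budget c ≥ 1 + Σ_{n=1}^N I_n, and let 0 < ε < 1/3. For each integer c_factor with 1 ≤ c_factor ≤ ⌈1/ε⌉·Σ_{n=1}^N I_n, let P(c_factor) = {r ∈ [I_1]×⋯×[I_N] : ∏_{n=1}^N R_n ≤ c − c_factor, Σ_{n=1}^N I_n R_n ≤ c_factor, and R_n ≤ min(⌈1/ε⌉, I_n) for all n}. For each integer k with 0 ≤ k ≤ ⌊log_{1+ε} c⌋, let Q(k) = {r ∈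 [I_1]×⋯×[I_N] : ∏_{n=1}^N R_n ≤ (1+ε)^k and Σ_{n=1}^N I_n R_n ≤ c − (1+ε)^k}. Suppose that for every c_factor with P(c_factor) nonempty we are given r'(c_factor) ∈ P(c_factor) with f(r'(c_factor)) ≥ (1−ε)·max_{r∈P(c_factor)} f(r), and for every k with Q(k) nonempty we are given r^(k) ∈ Q(k) with f(r^(k)) ≥ (1−ε)·max_{r∈Q(k)} f(r). Let S be the (finite, nonempty) collection of all these selected core shapes. Then every r ∈ S is feasible for the Tucker packing instance, and max_{r∈S} f(r) ≥ (1 − 3ε) · max{f(r) : r ∈ [I_1]×⋯×[I_N], ∏_{n=1}^N R_n + Σ_{n=1}^N I_n R_n ≤ c}. -/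
set_option maxHeartbeats 1000000


open scoped BigOperators

/-- Head averaging: for a nonincreasing nonneg sequence on `[1, M]`,
`v * Σ_{i=1}^M g i ≤ M * Σ_{i=1}^v g i`. -/
lemma head_avg (g : ℕ → ℝ) (M v : ℕ) (hv : 1 ≤ v) (hvM : v ≤ M)
    (h0 : 0 ≤ g v)
    (hmono : ∀ i j, 1 ≤ i → i ≤ j → j ≤ M → g j ≤ g i) :
    (v : ℝ) * ∑ i ∈ Finset.Icc 1 M, g i ≤ (M : ℝ) * ∑ i ∈ Finset.Icc 1 v, g i := by
  have hIcc : ∀ t : ℕ, Finset.Icc 1 t = Finset.Ioc 0 t := fun t => Finset.Icc_add_one_left_eq_Ioc 0 t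
  have hsplit : ∑ i ∈ Finset.Icc 1 v, g i + ∑ i ∈ Finset.Ioc v M, g i
      = ∑ i ∈ Finset.Icc 1 M, g i := by
    rw [hIcc v, hIcc M]
    exact Finset.sum_Ioc_consecutive g (Nat.zero_le v) hvM
  have hT : ∑ i ∈ Finset.Ioc v M, g i ≤ ((M : ℝ) - v) * g v := by
    have h := Finset.sum_le_card_nsmul (Finset.Ioc v M) g (g v)
      (fun i hi => by
        have hi' := Finset.mem_Ioc.1 hi
        exact hmono v i hv hi'.1.le hi'.2)
    rw [Nat.card_Ioc, nsmul_eq_mul] at h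
    have : ((M - v : ℕ) : ℝ) = (M : ℝ) - v := by
      rw [Nat.cast_sub hvM]
    rw [this] at h
    exact h
  have hS : (v : ℝ) * g v ≤ ∑ i ∈ Finset.Icc 1 v, g i := by
    have h := Finset.card_nsmul_le_sum (Finset.Icc 1 v) g (g v)
      (fun i hi => by
        have hi' := Finset.mem_Icc.1 hi
        exact hmono i v hi'.1 hi'.2 hvM)
    rw [Nat.card_Icc, nsmul_eq_mul] at h
    have : ((v + 1 - 1 : ℕ) : ℝ) = (v : ℝ) := by simp
    rw [this] at h
    exact h
  have hv0 : (0 : ℝ) ≤ v := Nat.cast_nonneg v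
  have hMv : (0 : ℝ) ≤ (M : ℝ) - v := by
    have : (v : ℝ) ≤ M := Nat.cast_le.2 hvM
    linarith
  nlinarith [mul_le_mul_of_nonneg_left hT hv0, mul_le_mul_of_nonneg_left hS hMv, hsplit]

lemma fObj_nonneg {N : ℕ} (I : Fin N → ℕ) (a : Fin N → ℕ → ℝ)
    (ha0 : ∀ n i, 1 ≤ i → i ≤ I n → 0 ≤ a n i)
    (R : Fin N → ℕ) (hR : ∀ n, R n ≤ I n) : 0 ≤ fObj a R :=
  Finset.sum_nonneg fun n _ => Finset.sum_nonneg fun i hi => by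
    have hi' := Finset.mem_Icc.1 hi
    exact ha0 n i hi'.1 (hi'.2.trans (hR n))

/-- **Approximation guarantee of `TuckerPackingSolver`**: every core shape selected
from the small budget splits `P(c_factor)` or the large budget splits `Q(k)` is
feasible, and the best selected shape is a `(1 − 3ε)`-approximation to the Tucker
packing problem. -/
theorem tucker_packing_solver {N : ℕ} (I : Fin N → ℕ) (hI : ∀ n, 1 ≤ I n)
    (a : Fin N → ℕ → ℝ)
    (ha0 : ∀ n i, 1 ≤ i → i ≤ I n → 0 ≤ a n i)
    (hamono : ∀ n i j, 1 ≤ i → i ≤ j → j ≤ I n → a n j ≤ a n i)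
    (c : ℝ) (hc : 1 + ((∑ n, I n : ℕ) : ℝ) ≤ c)
    (ε : ℝ) (hε0 : 0 < ε) (hε3 : ε < 1 / 3)
    (P : ℕ → Set (Fin N → ℕ))
    (hP : ∀ cf : ℕ, P cf = {R | (∀ n, 1 ≤ R n ∧ R n ≤ I n) ∧
      ((∏ n, R n : ℕ) : ℝ) ≤ c - (cf : ℝ) ∧
      (∑ n, I n * R n) ≤ cf ∧
      ∀ n, R n ≤ min ⌈1 / ε⌉₊ (I n)})
    (Q : ℕ → Set (Fin N → ℕ))
    (hQ : ∀ k : ℕ, Q k = {R | (∀ n, 1 ≤ R n ∧ R n ≤ I n) ∧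
      ((∏ n, R n : ℕ) : ℝ) ≤ (1 + ε) ^ k ∧
      ((∑ n, I n * R n : ℕ) : ℝ) ≤ c - (1 + ε) ^ k})
    (r' : ℕ → Fin N → ℕ)
    (hr' : ∀ cf : ℕ, 1 ≤ cf → cf ≤ ⌈1 / ε⌉₊ * ∑ n, I n → (P cf).Nonempty →
      r' cf ∈ P cf ∧ ∀ R ∈ P cf, (1 - ε) * fObj a R ≤ fObj a (r' cf))
    (rk : ℕ → Fin N → ℕ)
    (hrk : ∀ k : ℕ, k ≤ ⌊Real.logb (1 + ε) c⌋₊ → (Q k).Nonempty →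
      rk k ∈ Q k ∧ ∀ R ∈ Q k, (1 - ε) * fObj a R ≤ fObj a (rk k))
    (S : Set (Fin N → ℕ))
    (hS : S = {r | (∃ cf : ℕ, 1 ≤ cf ∧ cf ≤ ⌈1 / ε⌉₊ * ∑ n, I n ∧
        (P cf).Nonempty ∧ r = r' cf) ∨
      (∃ k : ℕ, k ≤ ⌊Real.logb (1 + ε) c⌋₊ ∧ (Q k).Nonempty ∧ r = rk k)}) :
    (∀ r ∈ S, (∀ n, 1 ≤ r n ∧ r n ≤ I n) ∧
      ((∏ n, r n : ℕ) : ℝ) + ((∑ n, I n * r n : ℕ) : ℝ) ≤ c) ∧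
    ∀ R : Fin N → ℕ, (∀ n, 1 ≤ R n ∧ R n ≤ I n) →
      ((∏ n, R n : ℕ) : ℝ) + ((∑ n, I n * R n : ℕ) : ℝ) ≤ c →
      ∃ r ∈ S, (1 - 3 * ε) * fObj a R ≤ fObj a r := by
  have hb1 : (1 : ℝ) < 1 + ε := by linarith
  have hε1 : (0 : ℝ) < 1 + ε := by linarith
  constructor
  · -- feasibility of every selected shape
    intro r hr
    rw [hS] at hr
    rcases hr with ⟨cf, h1, h2, hne, rfl⟩ | ⟨k, hk, hne, rfl⟩
    · obtain ⟨hmem, -⟩ := hr' cf h1 h2 hne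
      rw [hP] at hmem
      obtain ⟨hb, hprod, hsum, -⟩ := hmem
      refine ⟨hb, ?_⟩
      have hsum' : ((∑ n, I n * r' cf n : ℕ) : ℝ) ≤ (cf : ℝ) := Nat.cast_le.2 hsum
      linarith
    · obtain ⟨hmem, -⟩ := hrk k hk hne
      rw [hQ] at hmem
      obtain ⟨hb, hprod, hsum⟩ := hmem
      exact ⟨hb, by linarith⟩
  · -- approximation guarantee
    intro R hR hfeas
    have hf0 : 0 ≤ fObj a R := fObj_nonneg I a ha0 R (fun n => (hR n).2)
    have hsum0 : (0 : ℝ) ≤ ((∑ n, I n * R n : ℕ) : ℝ) := Nat.cast_nonneg _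
    have hprod0 : (0 : ℝ) ≤ ((∏ n, R n : ℕ) : ℝ) := Nat.cast_nonneg _
    rcases Nat.eq_zero_or_pos N with hN | hNpos
    · -- degenerate case N = 0
      subst hN
      have hc1 : (1 : ℝ) ≤ c := by simpa using hc
      have hQ0 : R ∈ Q 0 := by
        rw [hQ]
        refine ⟨fun n => n.elim0, ?_, ?_⟩ <;> simp <;> linarith
      obtain ⟨hmem, hopt⟩ := hrk 0 (Nat.zero_le _) ⟨R, hQ0⟩
      refine ⟨rk 0, ?_, ?_⟩
      · rw [hS]; exact Or.inr ⟨0, Nat.zero_le _, ⟨R, hQ0⟩, rfl⟩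
      · simp [fObj]
    by_cases hbig : ∃ m, ⌈1 / ε⌉₊ < R m
    · -- some coordinate is large: use the Q family
      obtain ⟨m, hm⟩ := hbig
      have hRm : ((1 : ℝ) + ε) / ε ≤ (R m : ℝ) := by
        have h1 : (1 / ε : ℝ) ≤ ⌈1 / ε⌉₊ := Nat.le_ceil _
        have h2 : (⌈1 / ε⌉₊ : ℝ) + 1 ≤ R m := by exact_mod_cast hm
        have h3 : ((1 : ℝ) + ε) / ε = 1 / ε + 1 := by field_simp
        linarith
      have hRmε : (1 : ℝ) + ε ≤ ε * R m := by
        have := (div_le_iff₀ hε0).1 hRm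
        linarith
      have hRm1 : (1 : ℝ) + ε ≤ (R m : ℝ) := by nlinarith
      set x : ℝ := (R m : ℝ) / (1 + ε) with hxdef
      set v : ℕ := ⌊x⌋₊ with hvdef
      have hx0 : 0 ≤ x := by positivity
      have hvx : (v : ℝ) ≤ x := Nat.floor_le hx0
      have hvxmul : (1 + ε) * (v : ℝ) ≤ (R m : ℝ) := by
        have := (le_div_iff₀ hε1).1 hvx
        linarith
      have hv1 : 1 ≤ v := by
        apply Nat.le_floor
        rw [hxdef, le_div_iff₀ hε1]
        push_cast
        linarith
      have hvR : v ≤ R m := by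
        have : (v : ℝ) ≤ (R m : ℝ) := by nlinarith
        exact_mod_cast this
      have hvlow : (1 - ε) * (R m : ℝ) ≤ (1 + ε) * v := by
        have h1 : x - 1 < (v : ℝ) := Nat.sub_one_lt_floor x
        have hx : (1 + ε) * x = R m := by
          rw [hxdef]; field_simp
        nlinarith [mul_lt_mul_of_pos_left h1 hε1]
      have hv2ε : (1 - 2 * ε) * (R m : ℝ) ≤ (v : ℝ) := by
        have hRm0 : (0 : ℝ) ≤ (R m : ℝ) := Nat.cast_nonneg _
        nlinarith [mul_nonneg (mul_nonneg hε0.le hε0.le) hRm0]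
      set R' : Fin N → ℕ := Function.update R m v with hR'def
      have hR'le : ∀ n, R' n ≤ R n := by
        intro n
        rcases eq_or_ne n m with rfl | hn
        · simp [hR'def, hvR]
        · simp [hR'def, Function.update_of_ne hn]
      have hR'b : ∀ n, 1 ≤ R' n ∧ R' n ≤ I n := by
        intro n
        rcases eq_or_ne n m with rfl | hn
        · simp only [hR'def, Function.update_self]
          exact ⟨hv1, hvR.trans (hR n).2⟩
        · simp only [hR'def, Function.update_of_ne hn]
          exact hR n
      -- products
      have hprodR : (∏ n, R n) = R m * ∏ n ∈ Finset.univ.erase m, R n :=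
        (Finset.mul_prod_erase _ _ (Finset.mem_univ m)).symm
      have hprodR' : (∏ n, R' n) = v * ∏ n ∈ Finset.univ.erase m, R n := by
        rw [← Finset.mul_prod_erase Finset.univ R' (Finset.mem_univ m)]
        congr 1
        · simp [hR'def]
        · exact Finset.prod_congr rfl fun n hn => by
            simp [hR'def, Function.update_of_ne (Finset.ne_of_mem_erase hn)]
      have hp1 : 0 < ∏ n, R n := Finset.prod_pos fun n _ => (hR n).1
      have hpc : ((∏ n, R n : ℕ) : ℝ) ≤ c := by linarith
      set L : ℝ := Real.logb (1 + ε) ((∏ n, R n : ℕ) : ℝ) with hLdef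
      set k : ℕ := ⌊L⌋₊ with hkdef
      have hppos : (0 : ℝ) < ((∏ n, R n : ℕ) : ℝ) := by exact_mod_cast hp1
      have hL0 : 0 ≤ L := Real.logb_nonneg hb1 (by exact_mod_cast hp1)
      have hk_le_p : ((1 : ℝ) + ε) ^ k ≤ ((∏ n, R n : ℕ) : ℝ) := by
        have h1 : ((k : ℝ)) ≤ L := Nat.floor_le hL0
        calc ((1 : ℝ) + ε) ^ k = (1 + ε) ^ ((k : ℕ) : ℝ) := (Real.rpow_natCast _ _).symm
          _ ≤ (1 + ε) ^ L := (Real.rpow_le_rpow_left_iff hb1).2 h1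
          _ = _ := Real.rpow_logb hε1 (ne_of_gt hb1) hppos
      have hp_le : ((∏ n, R n : ℕ) : ℝ) ≤ (1 + ε) * (1 + ε) ^ k := by
        have h1 : L < (k : ℝ) + 1 := Nat.lt_floor_add_one L
        calc ((∏ n, R n : ℕ) : ℝ) = (1 + ε) ^ L :=
              (Real.rpow_logb hε1 (ne_of_gt hb1) hppos).symm
          _ ≤ (1 + ε) ^ (((k + 1 : ℕ) : ℕ) : ℝ) := by
              apply (Real.rpow_le_rpow_left_iff hb1).2
              push_cast; linarith
          _ = (1 + ε) ^ (k + 1) := Real.rpow_natCast _ _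
          _ = (1 + ε) * (1 + ε) ^ k := by ring
      have hkc : k ≤ ⌊Real.logb (1 + ε) c⌋₊ := by
        apply Nat.floor_le_floor
        rw [hLdef]
        gcongr
        all_goals first | exact hb1 | exact hppos
      -- Q k membership of R'
      have hprodR'le : ((∏ n, R' n : ℕ) : ℝ) ≤ (1 + ε) ^ k := by
        have hq0 : (0 : ℝ) ≤ ((∏ n ∈ Finset.univ.erase m, R n : ℕ) : ℝ) := Nat.cast_nonneg _
        have h1 : (1 + ε) * ((∏ n, R' n : ℕ) : ℝ) ≤ ((∏ n, R n : ℕ) : ℝ) := by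
          rw [hprodR', hprodR, Nat.cast_mul, Nat.cast_mul]
          nlinarith [hvxmul, hq0]
        nlinarith [pow_pos hε1 k]
      have hsum'le : (∑ n, I n * R' n) ≤ ∑ n, I n * R n :=
        Finset.sum_le_sum fun n _ => Nat.mul_le_mul_left _ (hR'le n)
      have hmemQ : R' ∈ Q k := by
        rw [hQ]
        refine ⟨hR'b, hprodR'le, ?_⟩
        have h1 : ((∑ n, I n * R' n : ℕ) : ℝ) ≤ ((∑ n, I n * R n : ℕ) : ℝ) :=
          Nat.cast_le.2 hsum'le
        linarith
      obtain ⟨hmem, hopt⟩ := hrk k hkc ⟨R', hmemQ⟩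
      -- key objective comparison
      have hkey : (1 - 2 * ε) * fObj a R ≤ fObj a R' := by
        rw [fObj, fObj, Finset.mul_sum]
        apply Finset.sum_le_sum
        intro n _
        have hSn0 : 0 ≤ ∑ i ∈ Finset.Icc 1 (R n), a n i :=
          Finset.sum_nonneg fun i hi => by
            have hi' := Finset.mem_Icc.1 hi
            exact ha0 n i hi'.1 (hi'.2.trans (hR n).2)
        rcases eq_or_ne n m with rfl | hn
        · simp only [hR'def, Function.update_self]
          have hha := head_avg (a n) (R n) v hv1 hvR
            (ha0 n v (by omega) (hvR.trans (hR n).2))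
            (fun i j h1 h2 h3 => hamono n i j h1 h2 (h3.trans (hR n).2))
          have hRn0 : (0 : ℝ) < (R n : ℝ) := by
            have := (hR n).1; exact_mod_cast Nat.pos_of_ne_zero (by omega)
          nlinarith [mul_le_mul_of_nonneg_right hv2ε hSn0]
        · simp only [hR'def, Function.update_of_ne hn]
          nlinarith
      have hfin := hopt R' hmemQ
      refine ⟨rk k, ?_, ?_⟩
      · rw [hS]; exact Or.inr ⟨k, hkc, ⟨R', hmemQ⟩, rfl⟩
      · nlinarith [mul_le_mul_of_nonneg_left hkey (by linarith : (0 : ℝ) ≤ 1 - ε),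
          mul_nonneg (mul_nonneg hε0.le hε0.le) hf0]
    · -- all coordinates small: use the P family
      push_neg at hbig
      set cf : ℕ := ∑ n, I n * R n with hcfdef
      have hcf1 : 1 ≤ cf := by
        have n0 : Fin N := ⟨0, hNpos⟩
        calc 1 ≤ I n0 * R n0 := Nat.one_le_iff_ne_zero.2 (by
              have := (hR n0).1; have := hI n0; positivity)
          _ ≤ cf := by
              rw [hcfdef]
              exact Finset.single_le_sum (f := fun n => I n * R n)
                (fun n _ => Nat.zero_le _) (Finset.mem_univ n0)
      have hcf2 : cf ≤ ⌈1 / ε⌉₊ * ∑ n, I n := by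
        rw [Finset.mul_sum]
        exact Finset.sum_le_sum fun n _ => by
          calc I n * R n ≤ I n * ⌈1 / ε⌉₊ := Nat.mul_le_mul_left _ (hbig n)
            _ = ⌈1 / ε⌉₊ * I n := Nat.mul_comm _ _
      have hmemP : R ∈ P cf := by
        rw [hP]
        exact ⟨hR, by linarith, le_refl _, fun n => le_min (hbig n) (hR n).2⟩
      obtain ⟨hmem, hopt⟩ := hr' cf hcf1 hcf2 ⟨R, hmemP⟩
      have h := hopt R hmemP
      refine ⟨r' cf, ?_, ?_⟩
      · rw [hS]; exact Or.inl ⟨cf, hcf1, hcf2, ⟨R, hmemP⟩, rfl⟩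
      · nlinarith
end
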